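/- arXiv:2206.06543 — 6 statements merged into one kernel-verified Lean document; each statement's English description precedes it below -/
import Mathlib

section
/- Let (G,φ) be an ordered graph with at least one vertex. Then the number of maximal edges of (G,φ) is at most |V(G)| − 1. -/
/-- In the ordered graph `(G, φ)`, the edge `uv` (with `φ u < φ v`) is maximal:
there is no other edge `u'v'` of `G` with `φ u' ≤ φ u` and `φ v ≤ φ v'`. -/
def MaxEdge {V : Type*} (G : SimpleGraph V) (φ : V → ℝ) (u v : V) : Prop :=
  G.Adj u v ∧ φ u < φ v ∧
    ¬ ∃ u' v', G.Adj u' v' ∧ φ u' ≤ φ u ∧ φ v ≤ φ v' ∧ ¬(u' = u ∧ v' = v)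

/-- An ordered graph `(G, φ)` with at least one vertex has at most `|V(G)| - 1`
maximal edges. -/
theorem card_maxEdges_le
    {V : Type*} [Fintype V] [Nonempty V] (G : SimpleGraph V) (φ : V → ℝ)
    (hφ : Function.Injective φ) :
    Set.ncard {p : V × V | MaxEdge G φ p.1 p.2} ≤ Fintype.card V - 1 := by
  obtain ⟨v₀, hv₀⟩ := Finite.exists_min φ
  set S : Set (V × V) := {p : V × V | MaxEdge G φ p.1 p.2} with hS
  have hinj : Set.InjOn Prod.snd S := by
    rintro ⟨u, v⟩ hp ⟨u', v'⟩ hq (h : v = v')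
    subst h
    simp only [hS, Set.mem_setOf_eq] at hp hq
    obtain ⟨hadj, hlt, hmax⟩ := hp
    obtain ⟨hadj', hlt', hmax'⟩ := hq
    by_contra hne
    have hu : u ≠ u' := by simpa using hne
    rcases (hφ.ne hu).lt_or_gt with h | h
    · exact hmax' ⟨u, v, hadj, le_of_lt h, le_refl _, fun h' => hu h'.1⟩
    · exact hmax ⟨u', v, hadj', le_of_lt h, le_refl _, fun h' => hu h'.1.symm⟩
  have hsub : Prod.snd '' S ⊆ ({v₀}ᶜ : Set V) := by
    rintro v ⟨⟨u, w⟩, hp, rfl⟩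
    simp only [Set.mem_compl_iff, Set.mem_singleton_iff]
    rintro rfl
    exact absurd (hv₀ u) (not_le.mpr hp.2.1)
  have hcompl : ({v₀}ᶜ : Set V).ncard = Fintype.card V - 1 := by
    have h := Set.ncard_add_ncard_compl ({v₀} : Set V)
    rw [Set.ncard_singleton] at h
    have : Nat.card V = Fintype.card V := Nat.card_eq_fintype_card
    omega
  calc S.ncard = (Prod.snd '' S).ncard := (Set.ncard_image_of_injOn hinj).symm
    _ ≤ ({v₀}ᶜ : Set V).ncard := Set.ncard_le_ncard hsub (Set.toFinite _)
    _ = Fintype.card V - 1 := hcompl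
end

section
/- Let w ∈ ℕ, let (G,φ) be a J_w-free ordered graph, let c be a proper 3-coloring of G, let e = uv be an edge of G with φ(u) < φ(v), and let i ∈ {1,2,3}. Let U be the set of all vertices in lft(e) having at least one neighbor in c^{-1}(i) ∩ und(e), and let S ⊆ c^{-1}(i) ∩ und(e) be an inclusion-minimal set with the property that every vertex in U has a neighbor in S. Then |S| ≤ 27w² + 2. -/
/-- An ordered graph `(G, φ)` is `J_w`-free: there are no `3w + 2` vertices
`x 0, …, x (3w+1)` increasing with respect to `φ` whose only edge is between the
`(w+1)`-st and the `(2w+2)`-nd of them (zero-indexed: indices `w` and `2w+1`). -/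
def JwFree {V : Type*} (G : SimpleGraph V) (φ : V → ℝ) (w : ℕ) : Prop :=
  ¬ ∃ x : Fin (3 * w + 2) → V,
      (∀ i j : Fin (3 * w + 2), i < j → φ (x i) < φ (x j)) ∧
      ∀ i j : Fin (3 * w + 2), G.Adj (x i) (x j) ↔
        (((i : ℕ) = w ∧ (j : ℕ) = 2 * w + 1) ∨ ((j : ℕ) = w ∧ (i : ℕ) = 2 * w + 1))

/-- Let `(G, φ)` be a `J_w`-free ordered graph, `c` a proper 3-coloring of `G`,
`uv` an edge with `φ u < φ v`, and `i` a color. Let `U` be the set of vertices of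
`lft(e)` having a neighbor in `c⁻¹(i) ∩ und(e)`, and let `S ⊆ c⁻¹(i) ∩ und(e)` be an
inclusion-minimal set such that every vertex of `U` has a neighbor in `S`. Then
`|S| ≤ 27w² + 2`. -/
theorem minimal_dominating_set_small
    {V : Type*} [Fintype V] (w : ℕ) (G : SimpleGraph V) (φ : V → ℝ)
    (hφ : Function.Injective φ) (hfree : JwFree G φ w)
    (c : V → Fin 3) (hc : ∀ x y, G.Adj x y → c x ≠ c y)
    (u v : V) (huv : G.Adj u v) (hlt : φ u < φ v) (i : Fin 3)
    (U S : Set V)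
    (hU : U = {x : V | φ x < φ u ∧ ∃ y, G.Adj x y ∧ c y = i ∧ φ u ≤ φ y ∧ φ y ≤ φ v})
    (hS : S ⊆ {y : V | c y = i ∧ φ u ≤ φ y ∧ φ y ≤ φ v})
    (hcov : ∀ x ∈ U, ∃ y ∈ S, G.Adj x y)
    (hmin : ∀ S' : Set V, S' ⊆ S → (∀ x ∈ U, ∃ y ∈ S', G.Adj x y) → S' = S) :
    S.ncard ≤ 27 * w ^ 2 + 2 := by
  classical
  -- the case `w = 0` is vacuous: `J_0`-freeness forbids any edge, but `uv` is one
  rcases Nat.eq_zero_or_pos w with hw0 | hw1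
  · exfalso
    subst hw0
    apply hfree
    refine ⟨fun k => if (k : ℕ) = 0 then u else v, ?_, ?_⟩
    · intro a b hab
      have hab' : (a : ℕ) < (b : ℕ) := hab
      have haa := a.isLt
      have hbb := b.isLt
      dsimp only
      split_ifs with h1 h2
      · omega
      · exact hlt
      · omega
      · omega
    · intro a b
      have haa := a.isLt
      have hbb := b.isLt
      dsimp only
      split_ifs with h1 h2 h3
      · exact iff_of_false (G.irrefl) (by omega)
      · exact iff_of_true huv (Or.inl ⟨h1, by omega⟩)
      · exact iff_of_true huv.symm (Or.inr ⟨h3, by omega⟩)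
      · exact iff_of_false (G.irrefl) (by omega)
  by_contra hcard
  push_neg at hcard
  -- Step 1: private neighbors from minimality
  have hpriv : ∀ s ∈ S, ∃ x, x ∈ U ∧ G.Adj x s ∧ ∀ s' ∈ S, G.Adj x s' → s' = s := by
    intro s hs
    by_contra hcon
    push_neg at hcon
    have hcov' : ∀ x ∈ U, ∃ y ∈ S \ {s}, G.Adj x y := by
      intro x hx
      obtain ⟨y, hy, hadj⟩ := hcov x hx
      by_cases hys : y = s
      · subst hys
        obtain ⟨s', hs', hadj', hne⟩ := hcon x hx hadj
        exact ⟨s', ⟨hs', hne⟩, hadj'⟩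
      · exact ⟨y, ⟨hy, hys⟩, hadj⟩
    have heq := hmin (S \ {s}) Set.diff_subset hcov'
    have : s ∈ S \ {s} := by rw [heq]; exact hs
    simp at this
  have hpriv' : ∀ s : V, ∃ x, s ∈ S → x ∈ U ∧ G.Adj x s ∧ ∀ s' ∈ S, G.Adj x s' → s' = s := by
    intro s
    by_cases hs : s ∈ S
    · obtain ⟨x, hx⟩ := hpriv s hs
      exact ⟨x, fun _ => hx⟩
    · exact ⟨u, fun h => absurd h hs⟩
  choose f hf using hpriv'
  have hfU : ∀ s ∈ S, φ (f s) < φ u := by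
    intro s hs
    have h1 := (hf s hs).1
    rw [hU] at h1
    exact h1.1
  have hfadj : ∀ s ∈ S, G.Adj (f s) s := fun s hs => (hf s hs).2.1
  have hfpriv : ∀ s ∈ S, ∀ s' ∈ S, G.Adj (f s) s' → s' = s := fun s hs => (hf s hs).2.2
  have hfinj : ∀ s₁ ∈ S, ∀ s₂ ∈ S, f s₁ = f s₂ → s₁ = s₂ := by
    intro s₁ h₁ s₂ h₂ heq
    exact hfpriv s₂ h₂ s₁ h₁ (heq ▸ hfadj s₁ h₁)
  have hSprop : ∀ y ∈ S, c y = i ∧ φ u ≤ φ y ∧ φ y ≤ φ v := fun y hy => hS hy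
  have hSge : ∀ y ∈ S, φ u ≤ φ y := fun y hy => (hSprop y hy).2.1
  have hSind : ∀ y ∈ S, ∀ z ∈ S, ¬ G.Adj y z := by
    intro y hy z hz hadj
    exact hc y z hadj (((hSprop y hy).1).trans ((hSprop z hz).1).symm)
  -- Step 2: pass to a Finset and apply pigeonhole on the color of the private neighbors
  set St := S.toFinset with hStdef
  have hmemSt : ∀ {y : V}, y ∈ St → y ∈ S := fun {y} h => Set.mem_toFinset.mp h
  have hncard : 27 * w ^ 2 + 2 < St.card := by
    rw [hStdef, ← Set.ncard_eq_toFinset_card']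
    exact hcard
  have hex : ∃ j : Fin 3, 3 * w + 1 ≤ (St.filter fun s => c (f s) = j).card := by
    by_contra hno
    push_neg at hno
    have hsum : St.card = ∑ j : Fin 3, (St.filter fun s => c (f s) = j).card :=
      Finset.card_eq_sum_card_fiberwise (fun x _ => Finset.mem_univ _)
    have hle : St.card ≤ ∑ _j : Fin 3, 3 * w := by
      rw [hsum]; exact Finset.sum_le_sum fun j _ => Nat.lt_succ_iff.mp (hno j)
    simp only [Finset.sum_const, Finset.card_univ, Fintype.card_fin, smul_eq_mul] at hle
    nlinarith
  obtain ⟨j, hj⟩ := hex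
  set Tf := St.filter fun s => c (f s) = j with hTfdef
  have hTfS : ∀ {y : V}, y ∈ Tf → y ∈ S := fun {y} hy => hmemSt (Finset.mem_filter.mp hy).1
  have hTfc : ∀ {y : V}, y ∈ Tf → c (f y) = j := fun {y} hy => (Finset.mem_filter.mp hy).2
  set m := Tf.card with hmdef
  have hm : 3 * w + 1 ≤ m := hj
  -- order `V` by `φ` and enumerate
  letI : LinearOrder V := LinearOrder.lift' φ hφ
  have hlift : ∀ a b : V, a < b ↔ φ a < φ b := fun a b => Iff.rfl
  set t : Fin m ↪o V := Tf.orderEmbOfFin rfl with htdef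
  have htmem : ∀ k, t k ∈ Tf := fun k => Tf.orderEmbOfFin_mem rfl k
  have htmono : ∀ k l : Fin m, k < l → φ (t k) < φ (t l) :=
    fun k l h => (hlift _ _).mp (t.strictMono h)
  have hmw : m - w ≤ m := Nat.sub_le m w
  -- the bottom `m - w` elements of `Tf`
  set T' : Finset V := Finset.image (fun k : Fin (m - w) => t (Fin.castLE hmw k)) Finset.univ
    with hT'def
  have hT'card : T'.card = m - w := by
    rw [hT'def, Finset.card_image_of_injective _
      (fun a b h => Fin.castLE_injective hmw (t.injective h))]
    simp
  have hT'Tf : ∀ {y : V}, y ∈ T' → y ∈ Tf := by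
    intro y hy
    obtain ⟨k, _, hk⟩ := Finset.mem_image.mp hy
    exact hk ▸ htmem _
  have hT'S : ∀ {y : V}, y ∈ T' → y ∈ S := fun {y} hy => hTfS (hT'Tf hy)
  -- their private neighbors, enumerated in increasing `φ`-order
  set T'img := T'.image f with hT'imgdef
  have hT'imgcard : T'img.card = m - w := by
    rw [hT'imgdef, Finset.card_image_of_injOn, hT'card]
    intro a ha b hb hab
    exact hfinj a (hT'S ha) b (hT'S hb) hab
  set ee : Fin (m - w) ↪o V := T'img.orderEmbOfFin hT'imgcard with heedef
  have heemono : ∀ k l : Fin (m - w), k < l → φ (ee k) < φ (ee l) :=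
    fun k l h => (hlift _ _).mp (ee.strictMono h)
  have how : ∀ k : Fin (m - w), ∃ s, s ∈ T' ∧ f s = ee k := by
    intro k
    obtain ⟨s, hs, hfs⟩ := Finset.mem_image.mp (T'img.orderEmbOfFin_mem hT'imgcard k)
    exact ⟨s, hs, hfs⟩
  choose ow howT howf using how
  have howS : ∀ k, ow k ∈ S := fun k => hT'S (howT k)
  have hlow : ∀ k, φ (ee k) < φ u := fun k => (howf k) ▸ hfU (ow k) (howS k)
  have heec : ∀ k, c (ee k) = j := fun k => (howf k) ▸ hTfc (howT k |> hT'Tf)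
  have heeind : ∀ k l, ¬ G.Adj (ee k) (ee l) :=
    fun k l hadj => hc _ _ hadj ((heec k).trans (heec l).symm)
  have heepriv : ∀ k, ∀ s' ∈ S, G.Adj (ee k) s' → s' = ow k := by
    intro k s' hs' hadj
    rw [← howf k] at hadj
    exact hfpriv (ow k) (howS k) s' hs' hadj
  have hwlt : w < m - w := by omega
  have hedge : G.Adj (ee ⟨w, hwlt⟩) (ow ⟨w, hwlt⟩) := by
    rw [← howf ⟨w, hwlt⟩]
    exact hfadj _ (howS _)
  have heq_of_adj_ow : ∀ k, G.Adj (ee k) (ow ⟨w, hwlt⟩) → (k : ℕ) = w := by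
    intro k hadj
    have h1 : ow ⟨w, hwlt⟩ = ow k := heepriv k _ (howS ⟨w, hwlt⟩) hadj
    have h2 : ee ⟨w, hwlt⟩ = ee k := by rw [← howf, ← howf, h1]
    have := ee.injective h2
    exact (congrArg Fin.val this).symm
  have hnotopT' : ∀ r : Fin m, m - w ≤ (r : ℕ) → t r ∉ T' := by
    intro r hr hmem
    obtain ⟨k, _, hk⟩ := Finset.mem_image.mp hmem
    have h1 : ((Fin.castLE hmw k : Fin m) : ℕ) = (r : ℕ) := congrArg Fin.val (t.injective hk)
    have h2 := k.isLt
    simp only [Fin.coe_castLE] at h1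
    omega
  have hee_not_adj_top : ∀ k (r : Fin m), m - w ≤ (r : ℕ) → ¬ G.Adj (ee k) (t r) := by
    intro k r hr hadj
    have h1 : t r = ow k := heepriv k (t r) (hTfS (htmem r)) hadj
    exact hnotopT' r hr (h1 ▸ howT k)
  have hs_lt_top : ∀ r : Fin m, m - w ≤ (r : ℕ) → φ (ow ⟨w, hwlt⟩) < φ (t r) := by
    intro r hr
    obtain ⟨k, _, hk⟩ := Finset.mem_image.mp (howT ⟨w, hwlt⟩)
    rw [← hk]
    refine htmono _ _ ?_
    have := k.isLt
    simp only [Fin.lt_def, Fin.coe_castLE]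
    omega
  -- assemble the forbidden configuration
  apply hfree
  refine ⟨fun k =>
    if h1 : (k : ℕ) < 2 * w + 1 then ee ⟨(k : ℕ), by omega⟩
    else if h2 : (k : ℕ) = 2 * w + 1 then ow ⟨w, hwlt⟩
    else t ⟨m - w + ((k : ℕ) - (2 * w + 2)), by have := k.isLt; omega⟩, ?_, ?_⟩
  · intro a b hab
    have hab' : (a : ℕ) < (b : ℕ) := hab
    have haa := a.isLt
    have hbb := b.isLt
    dsimp only
    split_ifs with h1 h2 h3 h4 h5 h6 h7 h8
    · exact heemono _ _ (by simp only [Fin.lt_def]; exact hab')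
    · exact (hlow _).trans_le (hSge _ (howS _))
    · exact (hlow _).trans_le (hSge _ (hTfS (htmem _)))
    · omega
    · omega
    · exact hs_lt_top _ (Nat.le_add_right _ _)
    · omega
    · omega
    · refine htmono _ _ ?_
      simp only [Fin.lt_def]
      omega
  · intro a b
    have haa := a.isLt
    have hbb := b.isLt
    dsimp only
    split_ifs with h1 h2 h3 h4 h5 h6 h7 h8
    · exact iff_of_false (heeind _ _) (by omega)
    · constructor
      · intro hadj
        exact Or.inl ⟨heq_of_adj_ow _ hadj, h3⟩
      · rintro (⟨haw, -⟩ | ⟨-, haw⟩)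
        · have : (⟨(a : ℕ), by omega⟩ : Fin (m - w)) = ⟨w, hwlt⟩ := by
            exact Fin.ext haw
          rw [this]
          exact hedge
        · omega
    · exact iff_of_false (hee_not_adj_top _ _ (Nat.le_add_right _ _)) (by omega)
    · constructor
      · intro hadj
        exact Or.inr ⟨heq_of_adj_ow _ hadj.symm, h4⟩
      · rintro (⟨-, haw⟩ | ⟨hbw, -⟩)
        · omega
        · have : (⟨(b : ℕ), by omega⟩ : Fin (m - w)) = ⟨w, hwlt⟩ := by
            exact Fin.ext hbw
          rw [this]
          exact hedge.symm
    · exact iff_of_false (G.irrefl) (by omega)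
    · exact iff_of_false (hSind _ (howS _) _ (hTfS (htmem _))) (by omega)
    · exact iff_of_false (fun hadj => hee_not_adj_top _ _ (Nat.le_add_right _ _) hadj.symm)
        (by omega)
    · exact iff_of_false (hSind _ (hTfS (htmem _)) _ (howS _)) (by omega)
    · exact iff_of_false (hSind _ (hTfS (htmem _)) _ (hTfS (htmem _))) (by omega)
end

section
/- Let w ∈ ℕ, let (G,φ) be a J_w-free ordered graph, let c be a proper 3-coloring of G, and let e = uv be an edge of G with φ(u) < φ(v). Then there exists a set S ⊆ und(e) with u, v ∈ S such that for every i ∈ {1,2,3}: |S ∩ c^{-1}(i)| ≤ 27w² + 3, and every vertex x ∈ lft(e) that has a neighbor in c^{-1}(i) ∩ und(e) also has a neighbor in S ∩ c^{-1}(i). -/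
lemma greedy_aux {V : Type*} (G : SimpleGraph V) (φ : V → ℝ)
    (hφ : Function.Injective φ) (A : Finset V) :
    ∀ (n : ℕ) (X : Finset V), X.card ≤ n → (∀ x ∈ X, ∃ y ∈ A, G.Adj x y) →
    ∃ (m : ℕ) (xs ys : Fin m → V),
      (∀ j k : Fin m, j < k → φ (ys j) < φ (ys k)) ∧
      (∀ j, ys j ∈ A) ∧
      (∀ j, G.Adj (xs j) (ys j)) ∧
      (∀ j, ∀ z ∈ A, G.Adj (xs j) z → φ z ≤ φ (ys j)) ∧
      (∀ j k, j ≠ k → ¬ G.Adj (xs j) (ys k)) ∧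
      (∀ j, xs j ∈ X) ∧
      (∀ x ∈ X, ∃ j, G.Adj x (ys j)) := by
  classical
  intro n
  induction n with
  | zero =>
    intro X hX _
    have hXe : X = ∅ := Finset.card_eq_zero.mp (Nat.le_zero.mp hX)
    subst hXe
    exact ⟨0, Fin.elim0, Fin.elim0, fun j => j.elim0, fun j => j.elim0, fun j => j.elim0,
      fun j => j.elim0, fun j => j.elim0, fun j => j.elim0, fun x hx => absurd hx (by simp)⟩
  | succ n ih =>
    intro X hX hA
    rcases X.eq_empty_or_nonempty with rfl | hXne
    · exact ⟨0, Fin.elim0, Fin.elim0, fun j => j.elim0, fun j => j.elim0, fun j => j.elim0,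
        fun j => j.elim0, fun j => j.elim0, fun j => j.elim0, fun x hx => absurd hx (by simp)⟩
    · have hBne' : (A.filter (fun y => ∃ x ∈ X, G.Adj x y ∧ ∀ z ∈ A, G.Adj x z → φ z ≤ φ y)).Nonempty := by
        obtain ⟨x, hx⟩ := hXne
        obtain ⟨y0, hy0A, hy0adj⟩ := hA x hx
        have hNne : (A.filter (fun z => G.Adj x z)).Nonempty :=
          ⟨y0, Finset.mem_filter.mpr ⟨hy0A, hy0adj⟩⟩
        obtain ⟨y, hyN, hymax⟩ := Finset.exists_max_image _ φ hNne
        exact ⟨y, Finset.mem_filter.mpr ⟨(Finset.mem_filter.mp hyN).1, x, hx,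
          (Finset.mem_filter.mp hyN).2,
          fun z hz hadj => hymax z (Finset.mem_filter.mpr ⟨hz, hadj⟩)⟩⟩
      obtain ⟨y₀, hy₀B, hy₀min⟩ := Finset.exists_min_image _ φ hBne'
      obtain ⟨hy₀A, x₀, hx₀X, hx₀adj, hx₀max⟩ := Finset.mem_filter.mp hy₀B
      have hx₀notX' : x₀ ∉ X.filter (fun x => ¬ G.Adj x y₀) :=
        fun hmem => (Finset.mem_filter.mp hmem).2 hx₀adj
      have hss : X.filter (fun x => ¬ G.Adj x y₀) ⊂ X :=
        (Finset.ssubset_iff_of_subset (Finset.filter_subset _ _)).mpr ⟨x₀, hx₀X, hx₀notX'⟩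
      have hcard' : (X.filter (fun x => ¬ G.Adj x y₀)).card ≤ n := by
        have := Finset.card_lt_card hss
        omega
      obtain ⟨m, xs, ys, mono, hysA, adj, hmax, cross, hxsX, dom⟩ :=
        ih _ hcard' (fun x hx => hA x (Finset.filter_subset _ _ hx))
      have key : ∀ k : Fin m, φ y₀ < φ (ys k) := by
        intro k
        have hxk := hxsX k
        have hysB : ys k ∈ A.filter (fun y => ∃ x ∈ X, G.Adj x y ∧ ∀ z ∈ A, G.Adj x z → φ z ≤ φ y) :=
          Finset.mem_filter.mpr ⟨hysA k, xs k, Finset.filter_subset _ _ hxk, adj k, hmax k⟩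
        have hle := hy₀min _ hysB
        have hne : y₀ ≠ ys k := fun h => (Finset.mem_filter.mp hxk).2 (h ▸ adj k)
        exact lt_of_le_of_ne hle (fun h => hne (hφ h))
      refine ⟨m + 1, Fin.cons x₀ xs, Fin.cons y₀ ys, ?_, ?_, ?_, ?_, ?_, ?_, ?_⟩
      · intro j k hjk
        rcases Fin.eq_zero_or_eq_succ k with rfl | ⟨k', rfl⟩
        · exact absurd hjk (Fin.not_lt_zero j)
        · rcases Fin.eq_zero_or_eq_succ j with rfl | ⟨j', rfl⟩
          · simpa [Fin.cons_zero, Fin.cons_succ] using key k'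
          · simp only [Fin.cons_succ]
            exact mono j' k' (by rwa [Fin.succ_lt_succ_iff] at hjk)
      · intro j
        rcases Fin.eq_zero_or_eq_succ j with rfl | ⟨j', rfl⟩
        · simpa using hy₀A
        · simpa using hysA j'
      · intro j
        rcases Fin.eq_zero_or_eq_succ j with rfl | ⟨j', rfl⟩
        · simpa using hx₀adj
        · simpa using adj j'
      · intro j
        rcases Fin.eq_zero_or_eq_succ j with rfl | ⟨j', rfl⟩
        · simpa using hx₀max
        · simpa using hmax j'
      · intro j k hne
        rcases Fin.eq_zero_or_eq_succ j with rfl | ⟨j', rfl⟩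
        · rcases Fin.eq_zero_or_eq_succ k with rfl | ⟨k', rfl⟩
          · exact absurd rfl hne
          · simp only [Fin.cons_zero, Fin.cons_succ]
            intro hadj
            exact absurd (key k') (not_lt.mpr (hx₀max (ys k') (hysA k') hadj))
        · rcases Fin.eq_zero_or_eq_succ k with rfl | ⟨k', rfl⟩
          · simp only [Fin.cons_zero, Fin.cons_succ]
            exact (Finset.mem_filter.mp (hxsX j')).2
          · simp only [Fin.cons_succ]
            exact cross j' k' (fun h => hne (congrArg Fin.succ h))
      · intro j
        rcases Fin.eq_zero_or_eq_succ j with rfl | ⟨j', rfl⟩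
        · simpa using hx₀X
        · simpa using Finset.filter_subset _ _ (hxsX j')
      · intro x hx
        by_cases hadj : G.Adj x y₀
        · exact ⟨0, by simpa using hadj⟩
        · obtain ⟨j, hj⟩ := dom x (Finset.mem_filter.mpr ⟨hx, hadj⟩)
          exact ⟨j.succ, by simpa using hj⟩

lemma cert_bound {V : Type*} {G : SimpleGraph V} {φ : V → ℝ} {w : ℕ}
    (hfree : JwFree G φ w) (hφ : Function.Injective φ)
    {c : V → Fin 3} (hc : ∀ x y, G.Adj x y → c x ≠ c y)
    {u : V} {i₀ : Fin 3} {m : ℕ} {xs ys : Fin m → V}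
    (mono : ∀ j k : Fin m, j < k → φ (ys j) < φ (ys k))
    (hyu : ∀ j, φ u ≤ φ (ys j)) (hyc : ∀ j, c (ys j) = i₀)
    (hxu : ∀ j, φ (xs j) < φ u)
    (adj : ∀ j, G.Adj (xs j) (ys j))
    (cross : ∀ j k : Fin m, j ≠ k → ¬ G.Adj (xs j) (ys k)) :
    m ≤ 9 * w := by
  classical
  by_contra hm
  push_neg at hm
  have xsinj : Function.Injective xs := by
    intro j k hjk
    by_contra hne
    exact cross j k hne (hjk ▸ adj k)
  obtain ⟨a₀, -, hfib⟩ :=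
    Finset.exists_lt_card_fiber_of_mul_lt_card_of_maps_to
      (s := (Finset.univ : Finset (Fin m))) (t := (Finset.univ : Finset (Fin 3)))
      (f := fun j => c (xs j)) (fun a _ => Finset.mem_univ _)
      (by simpa using by omega : (Finset.univ : Finset (Fin 3)).card * (3 * w) < (Finset.univ : Finset (Fin m)).card)
  obtain ⟨t, htF, htcard⟩ := Finset.exists_subset_card_eq
    (s := Finset.univ.filter fun j => c (xs j) = a₀) (n := 3 * w + 1) (by omega)
  set h : Fin (3 * w + 1) ↪o Fin m := t.orderEmbOfFin htcard with hh
  have hcol : ∀ s : Fin (3 * w + 1), c (xs (h s)) = a₀ := fun s =>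
    (Finset.mem_filter.mp (htF (t.orderEmbOfFin_mem htcard s))).2
  have hw21 : (2 * w + 1) ≤ 3 * w + 1 := by omega
  set g : Fin (2 * w + 1) → Fin m := fun s => h (Fin.castLE hw21 s) with hg
  set σ : Equiv.Perm (Fin (2 * w + 1)) := Tuple.sort (fun s => φ (xs (g s))) with hσ
  have ginj : Function.Injective g := fun a b hab =>
    Fin.castLE_injective hw21 (h.injective hab)
  have finj : Function.Injective (fun s => φ (xs (g s))) :=
    fun a b hab => ginj (xsinj (hφ hab))
  have hmono : StrictMono (fun s => φ (xs (g (σ s)))) :=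
    (Tuple.monotone_sort (fun s => φ (xs (g s)))).strictMono_of_injective
      (finj.comp σ.injective)
  set q : Fin (2 * w + 1) → Fin m := fun s => g (σ s) with hq
  have qinj : Function.Injective q := ginj.comp σ.injective
  have hwlt : w < 2 * w + 1 := by omega
  have hqcol : ∀ s : Fin (2 * w + 1), c (xs (q s)) = a₀ := fun s => hcol _
  apply hfree
  refine ⟨fun i => if h1 : (i : ℕ) < 2 * w + 1 then xs (q ⟨i, h1⟩)
    else if h2 : (i : ℕ) = 2 * w + 1 then ys (q ⟨w, hwlt⟩)
    else ys (h ⟨(i : ℕ) - 1, by omega⟩), ?_, ?_⟩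
  · intro i j hij
    have hij' : (i : ℕ) < (j : ℕ) := hij
    have hi2 := i.isLt
    have hj2 := j.isLt
    dsimp only
    have hcasei : ((i : ℕ) < 2 * w + 1) ∨ ((i : ℕ) = 2 * w + 1) ∨ (2 * w + 1 < (i : ℕ)) := by omega
    have hcasej : ((j : ℕ) < 2 * w + 1) ∨ ((j : ℕ) = 2 * w + 1) ∨ (2 * w + 1 < (j : ℕ)) := by omega
    rcases hcasei with hi | hi | hi
    · rw [dif_pos hi]
      rcases hcasej with hj | hj | hj
      · rw [dif_pos hj]
        exact hmono (show (⟨(i : ℕ), hi⟩ : Fin (2 * w + 1)) < ⟨(j : ℕ), hj⟩ from hij')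
      · rw [dif_neg (by omega), dif_pos hj]
        exact lt_of_lt_of_le (hxu _) (hyu _)
      · rw [dif_neg (by omega), dif_neg (by omega)]
        exact lt_of_lt_of_le (hxu _) (hyu _)
    · rw [dif_neg (by omega), dif_pos hi]
      rcases hcasej with hj | hj | hj
      · omega
      · omega
      · rw [dif_neg (by omega), dif_neg (by omega)]
        refine mono _ _ (h.strictMono ?_)
        have hs := (σ ⟨w, hwlt⟩).isLt
        show ((Fin.castLE hw21 (σ ⟨w, hwlt⟩)) : ℕ) < ((⟨(j : ℕ) - 1, by omega⟩ : Fin (3 * w + 1)) : ℕ)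
        simp only [Fin.coe_castLE]
        omega
    · rw [dif_neg (by omega), dif_neg (by omega)]
      rcases hcasej with hj | hj | hj
      · omega
      · omega
      · rw [dif_neg (by omega), dif_neg (by omega)]
        refine mono _ _ (h.strictMono ?_)
        show ((⟨(i : ℕ) - 1, by omega⟩ : Fin (3 * w + 1)) : ℕ) < ((⟨(j : ℕ) - 1, by omega⟩ : Fin (3 * w + 1)) : ℕ)
        simp only
        omega
  · intro i j
    have hi2 := i.isLt
    have hj2 := j.isLt
    by_cases hij : i = j
    · subst hij
      refine iff_of_false (G.irrefl) ?_
      rintro (⟨ha, hb⟩ | ⟨ha, hb⟩) <;> omega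
    · have hijv : (i : ℕ) ≠ (j : ℕ) := fun hv => hij (Fin.ext hv)
      dsimp only
      have hcasei : ((i : ℕ) < 2 * w + 1) ∨ ((i : ℕ) = 2 * w + 1) ∨ (2 * w + 1 < (i : ℕ)) := by omega
      have hcasej : ((j : ℕ) < 2 * w + 1) ∨ ((j : ℕ) = 2 * w + 1) ∨ (2 * w + 1 < (j : ℕ)) := by omega
      rcases hcasei with hi | hi | hi
      · rw [dif_pos hi]
        rcases hcasej with hj | hj | hj
        · -- x-x
          rw [dif_pos hj]
          refine iff_of_false ?_ (by omega)
          intro hadj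
          have := hc _ _ hadj
          rw [hqcol, hqcol] at this
          exact this rfl
        · -- x vs edge-y
          rw [dif_neg (by omega), dif_pos hj]
          by_cases hiw : (i : ℕ) = w
          · refine iff_of_true ?_ (Or.inl ⟨hiw, hj⟩)
            have he : (⟨(i : ℕ), hi⟩ : Fin (2 * w + 1)) = ⟨w, hwlt⟩ := Fin.ext hiw
            rw [he]
            exact adj _
          · refine iff_of_false ?_ (by omega)
            refine cross _ _ ?_
            intro hqe
            exact hiw (congrArg Fin.val (qinj hqe))
        · -- x vs right-y
          rw [dif_neg (by omega), dif_neg (by omega)]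
          refine iff_of_false ?_ (by omega)
          refine cross _ _ ?_
          intro hqe
          have hqe' : h (Fin.castLE hw21 (σ ⟨(i : ℕ), hi⟩)) = h ⟨(j : ℕ) - 1, by omega⟩ := hqe
          have hv := congrArg Fin.val (h.injective hqe')
          have hs := (σ ⟨(i : ℕ), hi⟩).isLt
          simp only [Fin.coe_castLE] at hv
          omega
      · rw [dif_neg (by omega), dif_pos hi]
        rcases hcasej with hj | hj | hj
        · -- edge-y vs x
          rw [dif_pos hj]
          by_cases hjw : (j : ℕ) = w
          · refine iff_of_true ?_ (Or.inr ⟨hjw, hi⟩)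
            have he : (⟨(j : ℕ), hj⟩ : Fin (2 * w + 1)) = ⟨w, hwlt⟩ := Fin.ext hjw
            rw [he]
            exact (adj _).symm
          · refine iff_of_false ?_ (by omega)
            intro hadj
            refine cross (q ⟨(j : ℕ), hj⟩) (q ⟨w, hwlt⟩) ?_ hadj.symm
            intro hqe
            exact hjw (congrArg Fin.val (qinj hqe))
        · omega
        · -- edge-y vs right-y
          rw [dif_neg (by omega), dif_neg (by omega)]
          refine iff_of_false ?_ (by omega)
          intro hadj
          have := hc _ _ hadj
          rw [hyc, hyc] at this
          exact this rfl
      · rw [dif_neg (by omega), dif_neg (by omega)]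
        rcases hcasej with hj | hj | hj
        · -- right-y vs x
          rw [dif_pos hj]
          refine iff_of_false ?_ (by omega)
          intro hadj
          refine cross (q ⟨(j : ℕ), hj⟩) (h ⟨(i : ℕ) - 1, by omega⟩) ?_ hadj.symm
          intro hqe
          have hqe' : h (Fin.castLE hw21 (σ ⟨(j : ℕ), hj⟩)) = h ⟨(i : ℕ) - 1, by omega⟩ := hqe
          have hv := congrArg Fin.val (h.injective hqe')
          have hs := (σ ⟨(j : ℕ), hj⟩).isLt
          simp only [Fin.coe_castLE] at hv
          omega
        · -- right-y vs edge-y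
          rw [dif_neg (by omega), dif_pos hj]
          refine iff_of_false ?_ (by omega)
          intro hadj
          have := hc _ _ hadj
          rw [hyc, hyc] at this
          exact this rfl
        · -- right-y vs right-y
          rw [dif_neg (by omega), dif_neg (by omega)]
          refine iff_of_false ?_ (by omega)
          intro hadj
          have := hc _ _ hadj
          rw [hyc, hyc] at this
          exact this rfl

/-- Let `(G, φ)` be a `J_w`-free ordered graph, `c` a proper 3-coloring of `G`, and
`uv` an edge with `φ u < φ v`. Then there is a set `S ⊆ und(e)` containing `u` and `v`
such that for every color `i`, `|S ∩ c⁻¹(i)| ≤ 27w² + 3` and every vertex of `lft(e)`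
with a neighbor in `c⁻¹(i) ∩ und(e)` has a neighbor in `S ∩ c⁻¹(i)`. -/
theorem exists_small_color_dominating_set
    {V : Type*} [Fintype V] (w : ℕ) (G : SimpleGraph V) (φ : V → ℝ)
    (hφ : Function.Injective φ) (hfree : JwFree G φ w)
    (c : V → Fin 3) (hc : ∀ x y, G.Adj x y → c x ≠ c y)
    (u v : V) (huv : G.Adj u v) (hlt : φ u < φ v) :
    ∃ S : Set V,
      S ⊆ {x : V | φ u ≤ φ x ∧ φ x ≤ φ v} ∧ u ∈ S ∧ v ∈ S ∧
      ∀ i : Fin 3,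
        (S ∩ {y : V | c y = i}).ncard ≤ 27 * w ^ 2 + 3 ∧
        ∀ x : V, φ x < φ u →
          (∃ y, G.Adj x y ∧ c y = i ∧ φ u ≤ φ y ∧ φ y ≤ φ v) →
          ∃ y ∈ S, c y = i ∧ G.Adj x y := by
  classical
  have key : ∀ i₀ : Fin 3, ∃ T : Finset V,
      (∀ y ∈ T, (φ u ≤ φ y ∧ φ y ≤ φ v) ∧ c y = i₀) ∧
      T.card ≤ 9 * w ∧
      ∀ x : V, φ x < φ u → (∃ y, G.Adj x y ∧ c y = i₀ ∧ φ u ≤ φ y ∧ φ y ≤ φ v) →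
        ∃ y ∈ T, G.Adj x y := by
    intro i₀
    set A : Finset V := Finset.univ.filter (fun y => (φ u ≤ φ y ∧ φ y ≤ φ v) ∧ c y = i₀) with hA
    set X : Finset V := Finset.univ.filter (fun x => φ x < φ u ∧ ∃ y ∈ A, G.Adj x y) with hX
    obtain ⟨m, xs, ys, mono, hysA, adj, hmax, cross, hxsX, dom⟩ :=
      greedy_aux G φ hφ A X.card X le_rfl
        (fun x hx => (Finset.mem_filter.mp hx).2.2)
    have hysA' : ∀ j, (φ u ≤ φ (ys j) ∧ φ (ys j) ≤ φ v) ∧ c (ys j) = i₀ :=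
      fun j => (Finset.mem_filter.mp (hysA j)).2
    have hm : m ≤ 9 * w :=
      cert_bound hfree hφ hc mono (fun j => (hysA' j).1.1) (fun j => (hysA' j).2)
        (fun j => (Finset.mem_filter.mp (hxsX j)).2.1) adj cross
    refine ⟨Finset.univ.image ys, ?_, ?_, ?_⟩
    · intro y hy
      obtain ⟨j, -, rfl⟩ := Finset.mem_image.mp hy
      exact hysA' j
    · calc (Finset.univ.image ys).card ≤ (Finset.univ : Finset (Fin m)).card :=
            Finset.card_image_le
        _ = m := by simp
        _ ≤ 9 * w := hm
    · intro x hx hex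
      have hxX : x ∈ X := by
        refine Finset.mem_filter.mpr ⟨Finset.mem_univ _, hx, ?_⟩
        obtain ⟨y, hadj, hcy, hy1, hy2⟩ := hex
        exact ⟨y, Finset.mem_filter.mpr ⟨Finset.mem_univ _, ⟨hy1, hy2⟩, hcy⟩, hadj⟩
      obtain ⟨j, hj⟩ := dom x hxX
      exact ⟨ys j, Finset.mem_image.mpr ⟨j, Finset.mem_univ _, rfl⟩, hj⟩
  choose T hT1 hT2 hT3 using key
  refine ⟨{u, v} ∪ ⋃ i₀ : Fin 3, (T i₀ : Set V), ?_, ?_, ?_, ?_⟩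
  · rintro x (hx | hx)
    · rcases hx with rfl | rfl
      · exact ⟨le_refl _, hlt.le⟩
      · exact ⟨hlt.le, le_refl _⟩
    · obtain ⟨s, ⟨i₀, rfl⟩, hxs⟩ := hx
      exact (hT1 i₀ x hxs).1
  · exact Or.inl (Or.inl rfl)
  · exact Or.inl (Or.inr rfl)
  · intro i₀
    constructor
    · have hsub : ({u, v} ∪ ⋃ j : Fin 3, (T j : Set V)) ∩ {y : V | c y = i₀} ⊆
          ((insert u (insert v (T i₀)) : Finset V) : Set V) := by
        rintro y ⟨hy1 | hy1, hy2⟩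
        · rcases hy1 with rfl | rfl
          · simp
          · simp
        · obtain ⟨s, ⟨j, rfl⟩, hys⟩ := hy1
          have hcy : c y = j := (hT1 j y hys).2
          have : j = i₀ := by rw [← hcy]; exact hy2
          subst this
          simp [hys]
      have h1 := Set.ncard_le_ncard hsub ((insert u (insert v (T i₀)) : Finset V)).finite_toSet
      rw [Set.ncard_coe_finset] at h1
      have h2 : (insert u (insert v (T i₀))).card ≤ (T i₀).card + 2 := by
        calc (insert u (insert v (T i₀))).card ≤ (insert v (T i₀)).card + 1 :=
              Finset.card_insert_le _ _
          _ ≤ (T i₀).card + 1 + 1 := by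
              have := Finset.card_insert_le v (T i₀); omega
          _ = (T i₀).card + 2 := by omega
      have h3 : (T i₀).card ≤ 9 * w := hT2 i₀
      have hww : w ≤ w ^ 2 := by nlinarith
      have : 9 * w + 2 ≤ 27 * w ^ 2 + 3 := by nlinarith
      omega
    · intro x hx hex
      obtain ⟨y, hyT, hadj⟩ := hT3 i₀ x hx hex
      exact ⟨y, Or.inr (Set.mem_iUnion.mpr ⟨i₀, hyT⟩), (hT1 i₀ y hyT).2, hadj⟩
end

section
/- Let G be a finite simple graph and let H be a finite simple graph satisfying: (1) V(G) ⊆ V(H); (2) for every edge uv of G, uv is not an edge of H and there are three paths P_1^{uv}, P_2^{uv}, P_3^{uv} in H from u to v, each of length at least 3, which pairwise share only the vertices u and v; moreover, for all edges uv and st of G and all i, j ∈ {1,2,3} with (uv,i) ≠ (st,j), V(P_i^{uv}) ∩ V(P_j^{st}) = {u,v} ∩ {s,t}; and (3) every edge of H lies on some path P_i^{e} with e an edge of G and i ∈ {1,2,3}. Then there exists a 3-list-assignment L of H such that: L(u) = {1,2,3} for every u ∈ V(G); for every L-coloring f of H, the restriction of f to V(G) is a proper 3-coloring of G; and for every proper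 3-coloring g of G there is an L-coloring g' of H with g' restricted to V(G) equal to g. -/
open SimpleGraph

/-! ### Auxiliary combinatorial gadget -/

def gad (i : Fin 3) (k m : ℕ) : Finset (Fin 3) :=
  if m = 1 then {i, i + 1}
  else if m + 1 = k then {i, if k % 2 = 1 then i + 1 else i + 2}
  else {i + 1, i + 2}

lemma block (i : Fin 3) (k : ℕ) (hk : 3 ≤ k) (c : ℕ → Fin 3)
    (h0 : c 0 = i) (hkk : c k = i)
    (hadj : ∀ m, m < k → c m ≠ c (m + 1))
    (hmem : ∀ m, 1 ≤ m → m < k → c m ∈ gad i k m) : False := by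
  have claim : ∀ m, 1 ≤ m → m + 2 ≤ k → c m = if m % 2 = 1 then i + 1 else i + 2 := by
    intro m
    induction m with
    | zero => omega
    | succ n ih =>
      intro _ h2
      by_cases hn : n = 0
      · subst hn
        have hm := hmem 1 le_rfl (by omega)
        rw [gad, if_pos rfl] at hm
        have h01 := hadj 0 (by omega)
        rw [h0] at h01
        simp only [Finset.mem_insert, Finset.mem_singleton] at hm
        rcases hm with h | h
        · exact absurd h.symm h01
        · simpa using h
      · have hcn := ih (by omega) (by omega)
        have hm := hmem (n + 1) (by omega) (by omega)
        rw [gad, if_neg (by omega), if_neg (by omega)] at hm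
        have hne := hadj n (by omega)
        rw [hcn] at hne
        simp only [Finset.mem_insert, Finset.mem_singleton] at hm
        by_cases hp : n % 2 = 1
        · rw [if_pos hp] at hne
          rw [if_neg (by omega)]
          rcases hm with h | h
          · exact absurd h.symm hne
          · exact h
        · rw [if_neg hp] at hne
          rw [if_pos (by omega)]
          rcases hm with h | h
          · exact h
          · exact absurd h.symm hne
  have h1 := claim (k - 2) (by omega) (by omega)
  have h2 := hmem (k - 1) (by omega) (by omega)
  rw [gad, if_neg (by omega), if_pos (by omega)] at h2
  have ha := hadj (k - 2) (by omega)
  have hb := hadj (k - 1) (by omega)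
  rw [show k - 2 + 1 = k - 1 by omega] at ha
  rw [show k - 1 + 1 = k by omega, hkk] at hb
  rw [h1] at ha
  simp only [Finset.mem_insert, Finset.mem_singleton] at h2
  by_cases hp : k % 2 = 1
  · rw [if_pos hp] at h2
    rw [if_pos (by omega)] at ha
    rcases h2 with h | h
    · rw [h] at hb; exact hb rfl
    · exact ha h.symm
  · rw [if_neg hp] at h2
    rw [if_neg (by omega)] at ha
    rcases h2 with h | h
    · rw [h] at hb; exact hb rfl
    · exact ha h.symm

lemma extend (i a b : Fin 3) (k : ℕ) (hk : 3 ≤ k) (hab : a ≠ b) :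
    ∃ c : ℕ → Fin 3, c 0 = a ∧ c k = b ∧ (∀ m, m < k → c m ≠ c (m + 1)) ∧
      (∀ m, 1 ≤ m → m < k → c m ∈ gad i k m) := by
  have tri : ∀ j : Fin 3, j ≠ j + 1 ∧ j ≠ j + 2 ∧ j + 1 ≠ j + 2 := by decide
  by_cases hb : b = i
  · have haa : a ≠ i := fun h => hab (h.trans hb.symm)
    refine ⟨fun m => if m = 0 then a else if m = k then i else if m = 1 then i
      else if m % 2 = 0 then i + 1 else i + 2, by simp, by simp [show k ≠ 0 by omega, hb], ?_, ?_⟩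
    · intro m hm
      rcases (show m = 0 ∨ m = 1 ∨ (2 ≤ m ∧ m + 1 < k) ∨ (2 ≤ m ∧ m + 1 = k) by omega)
        with h | h | h | h
      · subst h
        simp only [if_pos rfl, if_neg (show (0:ℕ)+1 ≠ 0 by omega),
          if_neg (show (0:ℕ)+1 ≠ k by omega), if_pos (show (0:ℕ)+1 = 1 by omega)]
        exact haa
      · subst h
        simp only [if_neg (show (1:ℕ) ≠ 0 by omega), if_neg (show 1 ≠ k by omega), if_pos rfl,
          if_neg (show (1:ℕ)+1 ≠ 0 by omega), if_neg (show 1+1 ≠ k by omega),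
          if_neg (show (1:ℕ)+1 ≠ 1 by omega), if_pos (show (1+1) % 2 = 0 by omega)]
        exact (tri i).1
      · obtain ⟨h2, h3⟩ := h
        simp only [if_neg (show m ≠ 0 by omega), if_neg (show m ≠ k by omega),
          if_neg (show m ≠ 1 by omega), if_neg (show m + 1 ≠ 0 by omega),
          if_neg (show m + 1 ≠ k by omega), if_neg (show m + 1 ≠ 1 by omega)]
        by_cases hp : m % 2 = 0
        · rw [if_pos hp, if_neg (show ¬ (m+1) % 2 = 0 by omega)]; exact (tri i).2.2
        · rw [if_neg hp, if_pos (show (m+1) % 2 = 0 by omega)]; exact (tri i).2.2.symm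
      · obtain ⟨h2, h3⟩ := h
        simp only [if_neg (show m ≠ 0 by omega), if_neg (show m ≠ k by omega),
          if_neg (show m ≠ 1 by omega), if_neg (show m + 1 ≠ 0 by omega), if_pos h3]
        by_cases hp : m % 2 = 0
        · rw [if_pos hp]; exact ((tri i).1).symm
        · rw [if_neg hp]; exact ((tri i).2.1).symm
    · intro m h1 h2
      rcases (show m = 1 ∨ (2 ≤ m ∧ m + 1 < k) ∨ (2 ≤ m ∧ m + 1 = k) by omega) with h | h | h
      · subst h
        rw [gad, if_pos rfl]
        simp only [if_neg (show (1:ℕ) ≠ 0 by omega), if_neg (show 1 ≠ k by omega), if_pos rfl]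
        simp
      · obtain ⟨h3, h4⟩ := h
        rw [gad, if_neg (by omega), if_neg (by omega)]
        simp only [if_neg (show m ≠ 0 by omega), if_neg (show m ≠ k by omega),
          if_neg (show m ≠ 1 by omega)]
        by_cases hp : m % 2 = 0
        · rw [if_pos hp]; simp
        · rw [if_neg hp]; simp
      · obtain ⟨h3, h4⟩ := h
        rw [gad, if_neg (by omega), if_pos h4]
        simp only [if_neg (show m ≠ 0 by omega), if_neg (show m ≠ k by omega),
          if_neg (show m ≠ 1 by omega)]
        by_cases hp : m % 2 = 0
        · rw [if_pos hp, if_pos (show k % 2 = 1 by omega)]; simp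
        · rw [if_neg hp, if_neg (show ¬ k % 2 = 1 by omega)]; simp
  · by_cases ha : a = i
    · have hib : i ≠ b := fun h => hb h.symm
      refine ⟨fun m => if m = 0 then i else if m = k then b else if m + 1 = k then i
        else if m % 2 = 1 then i + 1 else i + 2, by simp [ha], by simp [show k ≠ 0 by omega], ?_, ?_⟩
      · intro m hm
        rcases (show m = 0 ∨ (1 ≤ m ∧ m + 2 < k) ∨ (1 ≤ m ∧ m + 2 = k) ∨ (2 ≤ m ∧ m + 1 = k)
          by omega) with h | h | h | h
        · subst h
          simp only [if_pos rfl, if_neg (show (0:ℕ)+1 ≠ 0 by omega),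
            if_neg (show (0:ℕ)+1 ≠ k by omega), if_neg (show (0:ℕ)+1+1 ≠ k by omega),
            if_pos (show ((0:ℕ)+1) % 2 = 1 by omega)]
          exact (tri i).1
        · obtain ⟨h1, h2⟩ := h
          simp only [if_neg (show m ≠ 0 by omega), if_neg (show m ≠ k by omega),
            if_neg (show m + 1 ≠ k by omega), if_neg (show m + 1 ≠ 0 by omega),
            if_neg (show m + 1 + 1 ≠ k by omega)]
          by_cases hp : m % 2 = 1
          · rw [if_pos hp, if_neg (show ¬ (m+1) % 2 = 1 by omega)]; exact (tri i).2.2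
          · rw [if_neg hp, if_pos (show (m+1) % 2 = 1 by omega)]; exact (tri i).2.2.symm
        · obtain ⟨h1, h2⟩ := h
          simp only [if_neg (show m ≠ 0 by omega), if_neg (show m ≠ k by omega),
            if_neg (show m + 1 ≠ k by omega), if_neg (show m + 1 ≠ 0 by omega),
            if_pos (show m + 1 + 1 = k by omega)]
          by_cases hp : m % 2 = 1
          · rw [if_pos hp]; exact ((tri i).1).symm
          · rw [if_neg hp]; exact ((tri i).2.1).symm
        · obtain ⟨h1, h2⟩ := h
          simp only [if_neg (show m ≠ 0 by omega), if_neg (show m ≠ k by omega), if_pos h2,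
            if_neg (show m + 1 ≠ 0 by omega), if_pos (show m + 1 = k by omega)]
          exact hib
      · intro m h1 h2
        rcases (show (m = 1 ∧ m + 1 < k) ∨ (2 ≤ m ∧ m + 1 < k) ∨ m + 1 = k by omega)
          with h | h | h
        · obtain ⟨h3, h4⟩ := h
          subst h3
          rw [gad, if_pos rfl]
          simp only [if_neg (show (1:ℕ) ≠ 0 by omega), if_neg (show 1 ≠ k by omega),
            if_neg (show 1 + 1 ≠ k by omega), if_pos (show 1 % 2 = 1 by omega)]
          simp
        · obtain ⟨h3, h4⟩ := h
          rw [gad, if_neg (by omega), if_neg (by omega)]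
          simp only [if_neg (show m ≠ 0 by omega), if_neg (show m ≠ k by omega),
            if_neg (show m + 1 ≠ k by omega)]
          by_cases hp : m % 2 = 1
          · rw [if_pos hp]; simp
          · rw [if_neg hp]; simp
        · rw [gad, if_neg (by omega), if_pos h]
          simp only [if_neg (show m ≠ 0 by omega), if_neg (show m ≠ k by omega), if_pos h]
          simp
    · -- a ≠ i, b ≠ i
      obtain ⟨e, he⟩ : ∃ e : Fin 3, e = if k % 2 = 1 then i + 1 else i + 2 := ⟨_, rfl⟩
      obtain ⟨X, hX⟩ : ∃ X : Fin 3, X = if b = e then i else e := ⟨_, rfl⟩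
      obtain ⟨Y, hY⟩ : ∃ Y : Fin 3, Y = if k = 3 ∧ b = e then i + 1 else i := ⟨_, rfl⟩
      have hXb : X ≠ b := by
        rw [hX]; by_cases hbe : b = e
        · rw [if_pos hbe]; exact fun h => hb h.symm
        · rw [if_neg hbe]; exact fun h => hbe h.symm
      have hXie : X = i ∨ X = e := by
        rw [hX]; by_cases hbe : b = e
        · exact Or.inl (if_pos hbe)
        · exact Or.inr (if_neg hbe)
      have hYi : Y = i ∨ Y = i + 1 := by
        rw [hY]; by_cases h3 : k = 3 ∧ b = e
        · exact Or.inr (if_pos h3)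
        · exact Or.inl (if_neg h3)
      refine ⟨fun m => if m = 0 then a else if m = k then b else if m = 1 then Y
        else if m + 1 = k then X else if m % 2 = 0 then i + 1 else i + 2,
        by simp, by simp [show k ≠ 0 by omega], ?_, ?_⟩
      · intro m hm
        rcases (show m = 0 ∨ (m = 1 ∧ k = 3) ∨ (m = 1 ∧ 4 ≤ k) ∨ (2 ≤ m ∧ m + 2 < k) ∨
          (2 ≤ m ∧ m + 2 = k) ∨ (2 ≤ m ∧ m + 1 = k) by omega) with h | h | h | h | h | h
        · subst h
          simp only [if_pos rfl, if_neg (show (0:ℕ)+1 ≠ 0 by omega),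
            if_neg (show (0:ℕ)+1 ≠ k by omega), if_pos (show (0:ℕ)+1 = 1 by omega)]
          rw [hY]
          by_cases h3 : k = 3 ∧ b = e
          · rw [if_pos h3]
            have hbe : b = i + 1 := by rw [h3.2, he, if_pos (show k % 2 = 1 by omega)]
            exact hbe ▸ hab
          · rw [if_neg h3]; exact ha
        · obtain ⟨h1, h3⟩ := h
          subst h1
          simp only [if_neg (show (1:ℕ) ≠ 0 by omega), if_neg (show 1 ≠ k by omega), if_pos rfl,
            if_neg (show (1:ℕ)+1 ≠ 0 by omega), if_neg (show 1+1 ≠ k by omega),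
            if_neg (show (1:ℕ)+1 ≠ 1 by omega), if_pos (show 1+1+1 = k by omega)]
          have hei : e = i + 1 := by rw [he, if_pos (show k % 2 = 1 by omega)]
          rw [hY, hX]
          by_cases hbe : b = e
          · rw [if_pos (show k = 3 ∧ b = e from ⟨h3, hbe⟩), if_pos hbe]
            exact ((tri i).1).symm
          · rw [if_neg (show ¬(k = 3 ∧ b = e) from fun hh => hbe hh.2), if_neg hbe, hei]
            exact (tri i).1
        · obtain ⟨h1, h3⟩ := h
          subst h1
          simp only [if_neg (show (1:ℕ) ≠ 0 by omega), if_neg (show 1 ≠ k by omega), if_pos rfl,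
            if_neg (show (1:ℕ)+1 ≠ 0 by omega), if_neg (show 1+1 ≠ k by omega),
            if_neg (show (1:ℕ)+1 ≠ 1 by omega), if_neg (show ¬ 1+1+1 = k by omega),
            if_pos (show (1+1) % 2 = 0 by omega)]
          rw [hY, if_neg (fun hh : k = 3 ∧ b = e => by omega)]
          exact (tri i).1
        · obtain ⟨h2, h3⟩ := h
          simp only [if_neg (show m ≠ 0 by omega), if_neg (show m ≠ k by omega),
            if_neg (show m ≠ 1 by omega), if_neg (show ¬ m + 1 = k by omega),
            if_neg (show m + 1 ≠ 0 by omega), if_neg (show m + 1 ≠ k by omega),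
            if_neg (show m + 1 ≠ 1 by omega), if_neg (show ¬ m + 1 + 1 = k by omega)]
          by_cases hp : m % 2 = 0
          · rw [if_pos hp, if_neg (show ¬ (m+1) % 2 = 0 by omega)]; exact (tri i).2.2
          · rw [if_neg hp, if_pos (show (m+1) % 2 = 0 by omega)]; exact (tri i).2.2.symm
        · obtain ⟨h2, h3⟩ := h
          simp only [if_neg (show m ≠ 0 by omega), if_neg (show m ≠ k by omega),
            if_neg (show m ≠ 1 by omega), if_neg (show ¬ m + 1 = k by omega),
            if_neg (show m + 1 ≠ 0 by omega), if_neg (show m + 1 ≠ k by omega),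
            if_neg (show m + 1 ≠ 1 by omega), if_pos (show m + 1 + 1 = k by omega)]
          by_cases hp : m % 2 = 0
          · rw [if_pos hp]
            have hei : e = i + 2 := by rw [he, if_neg (show ¬ k % 2 = 1 by omega)]
            rcases hXie with hx | hx
            · rw [hx]; exact ((tri i).1).symm
            · rw [hx, hei]; exact (tri i).2.2
          · rw [if_neg hp]
            have hei : e = i + 1 := by rw [he, if_pos (show k % 2 = 1 by omega)]
            rcases hXie with hx | hx
            · rw [hx]; exact ((tri i).2.1).symm
            · rw [hx, hei]; exact (tri i).2.2.symm
        · obtain ⟨h2, h3⟩ := h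
          simp only [if_neg (show m ≠ 0 by omega), if_neg (show m ≠ k by omega),
            if_neg (show m ≠ 1 by omega), if_pos h3, if_neg (show m + 1 ≠ 0 by omega),
            if_pos (show m + 1 = k by omega)]
          exact hXb
      · intro m h1 h2
        rcases (show m = 1 ∨ (2 ≤ m ∧ m + 1 < k) ∨ (2 ≤ m ∧ m + 1 = k) by omega) with h | h | h
        · subst h
          rw [gad, if_pos rfl]
          simp only [if_neg (show (1:ℕ) ≠ 0 by omega), if_neg (show 1 ≠ k by omega), if_pos rfl]
          rcases hYi with hy | hy <;> rw [hy] <;> simp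
        · obtain ⟨h3, h4⟩ := h
          rw [gad, if_neg (by omega), if_neg (by omega)]
          simp only [if_neg (show m ≠ 0 by omega), if_neg (show m ≠ k by omega),
            if_neg (show m ≠ 1 by omega), if_neg (show ¬ m + 1 = k by omega)]
          by_cases hp : m % 2 = 0
          · rw [if_pos hp]; simp
          · rw [if_neg hp]; simp
        · obtain ⟨h3, h4⟩ := h
          rw [gad, if_neg (by omega), if_pos h4]
          simp only [if_neg (show m ≠ 0 by omega), if_neg (show m ≠ k by omega),
            if_neg (show m ≠ 1 by omega), if_pos h4]
          rcases hXie with hx | hx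
          · rw [hx]; simp
          · rw [hx, he]; simp

lemma path_getVert_inj {V : Type*} {G : SimpleGraph V} {u v : V} {p : G.Walk u v}
    (hp : p.IsPath) : ∀ m, m ≤ p.length → ∀ n, n ≤ p.length →
      p.getVert m = p.getVert n → m = n := by
  induction p with
  | nil => intro m hm n hn _; simp at hm hn; omega
  | @cons a b c h q ih =>
    rw [Walk.cons_isPath_iff] at hp
    intro m hm n hn hmn
    match m, n with
    | 0, 0 => rfl
    | 0, n + 1 =>
      exfalso
      apply hp.2
      rw [Walk.mem_support_iff_exists_getVert]
      refine ⟨n, ?_, by simpa using hn⟩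
      simpa using hmn.symm
    | m + 1, 0 =>
      exfalso
      apply hp.2
      rw [Walk.mem_support_iff_exists_getVert]
      refine ⟨m, ?_, by simpa using hm⟩
      simpa using hmn
    | m + 1, n + 1 =>
      have := ih hp.1 m (by simpa using hm) n (by simpa using hn) (by simpa using hmn)
      omega

lemma edge_consecutive {V : Type*} {G : SimpleGraph V} {u v x y : V} (p : G.Walk u v)
    (h : s(x, y) ∈ p.edges) : ∃ m, m < p.length ∧
      ((p.getVert m = x ∧ p.getVert (m + 1) = y) ∨
       (p.getVert m = y ∧ p.getVert (m + 1) = x)) := by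
  induction p with
  | nil => simp at h
  | @cons a b c hadj q ih =>
    rw [Walk.edges_cons, List.mem_cons] at h
    rcases h with h | h
    · refine ⟨0, by simp [Walk.length_cons], ?_⟩
      rw [Sym2.eq_iff] at h
      rcases h with ⟨rfl, rfl⟩ | ⟨rfl, rfl⟩
      · left; simp
      · right; simp
    · obtain ⟨m, hm, hcase⟩ := ih h
      exact ⟨m + 1, by simp [Walk.length_cons]; omega, by simpa using hcase⟩

section
variable {W : Type*} [Fintype W] [DecidableEq W] (G H : SimpleGraph W) (VG : Set W)
  (P : ∀ u v : W, G.Adj u v → Fin 3 → H.Walk u v)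

open Classical in
noncomputable def pathPos {u v : W} (p : H.Walk u v) (x : W) : ℕ :=
  if h : ∃ m, p.getVert m = x then Nat.find h else 0

set_option linter.unusedSectionVars false

open Classical in
lemma pathPos_getVert {u v : W} {p : H.Walk u v} (hp : p.IsPath) {m : ℕ}
    (hm : m ≤ p.length) : pathPos H p (p.getVert m) = m := by
  have hex : ∃ n, p.getVert n = p.getVert m := ⟨m, rfl⟩
  rw [pathPos, dif_pos hex]
  refine (Nat.find_eq_iff hex).mpr ⟨rfl, fun n hn hc => ?_⟩
  have := path_getVert_inj hp n (le_trans (le_of_lt hn) hm) m hm hc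
  omega

open Classical in
lemma pathPos_mem {u v : W} {p : H.Walk u v} {x : W} (hx : x ∈ p.support) :
    p.getVert (pathPos H p x) = x ∧ pathPos H p x ≤ p.length := by
  obtain ⟨n, hn, hnl⟩ := Walk.mem_support_iff_exists_getVert.mp hx
  have hex : ∃ m, p.getVert m = x := ⟨n, hn⟩
  rw [pathPos, dif_pos hex]
  exact ⟨Nat.find_spec hex, le_trans (Nat.find_le hn) hnl⟩

open Classical in
noncomputable def pick (x : W) : Option (Σ' (u : W) (v : W) (_ : G.Adj u v), Fin 3) :=
  if h : ∃ t : Σ' (u : W) (v : W) (_ : G.Adj u v), Fin 3,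
      Fintype.equivFin W t.1 < Fintype.equivFin W t.2.1 ∧
      x ∈ (P t.1 t.2.1 t.2.2.1 t.2.2.2).support
  then some h.choose else none

lemma pick_eq_some {x : W} {t : Σ' (u : W) (v : W) (_ : G.Adj u v), Fin 3}
    (h : pick G H P x = some t) :
    Fintype.equivFin W t.1 < Fintype.equivFin W t.2.1 ∧
      x ∈ (P t.1 t.2.1 t.2.2.1 t.2.2.2).support := by
  rw [pick] at h
  split at h
  · next hex => obtain rfl : hex.choose = t := by injection h
                exact hex.choose_spec
  · exact absurd h (by simp)

lemma pick_spec
    (hpath : ∀ (u v : W) (huv : G.Adj u v) (i : Fin 3), (P u v huv i).IsPath)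
    (hint : ∀ (u v : W) (huv : G.Adj u v) (i : Fin 3),
      ∀ x ∈ (P u v huv i).support, x ∈ VG → x = u ∨ x = v)
    (hdisj : ∀ (u v : W) (huv : G.Adj u v) (i : Fin 3)
        (s t : W) (hst : G.Adj s t) (j : Fin 3),
      (s(u, v) ≠ s(s, t) ∨ i ≠ j) →
      ∀ x : W, (x ∈ (P u v huv i).support ∧ x ∈ (P s t hst j).support) ↔
        ((x = u ∨ x = v) ∧ (x = s ∨ x = t)))
    {u v : W} (huv : G.Adj u v) (i : Fin 3)
    (hord : Fintype.equivFin W u < Fintype.equivFin W v)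
    {m : ℕ} (h1 : 1 ≤ m) (h2 : m < (P u v huv i).length) :
    (P u v huv i).getVert m ∉ VG ∧
      pick G H P ((P u v huv i).getVert m) = some ⟨u, v, huv, i⟩ := by
  set p := P u v huv i with hpdef
  set x := p.getVert m with hxdef
  have hxsup : x ∈ p.support := by
    rw [Walk.mem_support_iff_exists_getVert]
    exact ⟨m, rfl, le_of_lt h2⟩
  have hxu : x ≠ u := by
    intro hcon
    have : p.getVert m = p.getVert 0 := by rw [← hxdef, hcon, Walk.getVert_zero]
    have := path_getVert_inj (hpath u v huv i) m (le_of_lt h2) 0 (by omega) this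
    omega
  have hxv : x ≠ v := by
    intro hcon
    have : p.getVert m = p.getVert p.length := by rw [← hxdef, hcon, Walk.getVert_length]
    have := path_getVert_inj (hpath u v huv i) m (le_of_lt h2) p.length le_rfl this
    omega
  have hxVG : x ∉ VG := fun hxin => by
    rcases hint u v huv i x hxsup hxin with h | h
    · exact hxu h
    · exact hxv h
  refine ⟨hxVG, ?_⟩
  have hex : ∃ t : Σ' (u : W) (v : W) (_ : G.Adj u v), Fin 3,
      Fintype.equivFin W t.1 < Fintype.equivFin W t.2.1 ∧
      x ∈ (P t.1 t.2.1 t.2.2.1 t.2.2.2).support := ⟨⟨u, v, huv, i⟩, hord, hxsup⟩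
  rw [pick, dif_pos hex]
  congr 1
  obtain ⟨⟨a, b, hab, j⟩, hc⟩ : ∃ t, hex.choose = t := ⟨_, rfl⟩
  rw [hc]
  have hprop := hex.choose_spec
  rw [hc] at hprop
  obtain ⟨hord', hxsup'⟩ := hprop
  by_cases hcase : s(a, b) = s(u, v) ∧ j = i
  · rcases Sym2.eq_iff.mp hcase.1 with ⟨rfl, rfl⟩ | ⟨rfl, rfl⟩
    · cases hcase.2; rfl
    · exact absurd hord (by simp at hord' ⊢; omega)
  · exfalso
    have hcond : s(a, b) ≠ s(u, v) ∨ j ≠ i := by tauto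
    have := (hdisj a b hab j u v huv i hcond x).mp ⟨hxsup', hxsup⟩
    rcases this.2 with h | h
    · exact hxu h
    · exact hxv h

open Classical in
noncomputable def LA : W → Finset (Fin 3) := fun x =>
  if x ∈ VG then Finset.univ
  else Option.elim (pick G H P x) Finset.univ
    (fun t => gad t.2.2.2 (P t.1 t.2.1 t.2.2.1 t.2.2.2).length
      (pathPos H (P t.1 t.2.1 t.2.2.1 t.2.2.2) x))

noncomputable def cExt (i : Fin 3) (k : ℕ) (a b : Fin 3) : ℕ → Fin 3 :=
  if h : 3 ≤ k ∧ a ≠ b then (extend i a b k h.1 h.2).choose else fun _ => 0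

lemma cExt_spec (i a b : Fin 3) (k : ℕ) (hk : 3 ≤ k) (hab : a ≠ b) :
    cExt i k a b 0 = a ∧ cExt i k a b k = b ∧
      (∀ m, m < k → cExt i k a b m ≠ cExt i k a b (m + 1)) ∧
      (∀ m, 1 ≤ m → m < k → cExt i k a b m ∈ gad i k m) := by
  simp only [cExt]
  rw [dif_pos (show 3 ≤ k ∧ a ≠ b from ⟨hk, hab⟩)]
  exact (extend i a b k hk hab).choose_spec

open Classical in
noncomputable def gExt (g : W → Fin 3) : W → Fin 3 := fun x =>
  if x ∈ VG then g x
  else Option.elim (pick G H P x) 0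
    (fun t => cExt t.2.2.2 (P t.1 t.2.1 t.2.2.1 t.2.2.2).length (g t.1) (g t.2.1)
      (pathPos H (P t.1 t.2.1 t.2.2.1 t.2.2.2) x))

end

/-- Realization lemma. Let `G` and `H` be graphs on a common vertex set, with the
vertex set of `G` being `VG` (all edges of `G` lie inside `VG`). Suppose that for
every edge `uv` of `G` (with `uv` not an edge of `H`) we are given three paths
`P u v huv 0`, `P u v huv 1`, `P u v huv 2` in `H` from `u` to `v`, each of length at
least 3, compatible with reversal, whose interiors avoid `VG`, such that for edges
`uv`, `st` of `G` and indices `i`, `j` with `(uv, i) ≠ (st, j)` the vertex sets of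
`P_i^{uv}` and `P_j^{st}` intersect exactly in `{u,v} ∩ {s,t}`, and such that every
edge of `H` lies on one of these paths. Then there is a 3-list-assignment `L` of `H`
that is full on `VG`, such that every `L`-coloring of `H` restricts to a proper
3-coloring of `G`, and every proper 3-coloring of `G` extends to an `L`-coloring
of `H`. -/
theorem realization_list_assignment
    {W : Type*} [Fintype W] [DecidableEq W]
    (G H : SimpleGraph W) (VG : Set W)
    (hsupp : ∀ u v : W, G.Adj u v → u ∈ VG ∧ v ∈ VG)
    (P : ∀ u v : W, G.Adj u v → Fin 3 → H.Walk u v)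
    (hsymm : ∀ (u v : W) (huv : G.Adj u v) (i : Fin 3),
      P v u huv.symm i = (P u v huv i).reverse)
    (hpath : ∀ (u v : W) (huv : G.Adj u v) (i : Fin 3), (P u v huv i).IsPath)
    (hlen : ∀ (u v : W) (huv : G.Adj u v) (i : Fin 3), 3 ≤ (P u v huv i).length)
    (hnoedge : ∀ u v : W, G.Adj u v → ¬ H.Adj u v)
    (hint : ∀ (u v : W) (huv : G.Adj u v) (i : Fin 3),
      ∀ x ∈ (P u v huv i).support, x ∈ VG → x = u ∨ x = v)
    (hdisj : ∀ (u v : W) (huv : G.Adj u v) (i : Fin 3)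
        (s t : W) (hst : G.Adj s t) (j : Fin 3),
      (s(u, v) ≠ s(s, t) ∨ i ≠ j) →
      ∀ x : W, (x ∈ (P u v huv i).support ∧ x ∈ (P s t hst j).support) ↔
        ((x = u ∨ x = v) ∧ (x = s ∨ x = t)))
    (hcover : ∀ x y : W, H.Adj x y →
      ∃ (u v : W) (huv : G.Adj u v) (i : Fin 3), s(x, y) ∈ (P u v huv i).edges) :
    ∃ L : W → Finset (Fin 3),
      (∀ u ∈ VG, L u = (Finset.univ : Finset (Fin 3))) ∧
      (∀ f : W → Fin 3, (∀ x y, H.Adj x y → f x ≠ f y) → (∀ x, f x ∈ L x) →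
        ∀ u v, G.Adj u v → f u ≠ f v) ∧
      (∀ g : W → Fin 3, (∀ u v, G.Adj u v → g u ≠ g v) →
        ∃ g' : W → Fin 3, (∀ x y, H.Adj x y → g' x ≠ g' y) ∧ (∀ x, g' x ∈ L x) ∧
          ∀ u ∈ VG, g' u = g u) := by
  refine ⟨LA G H VG P, ?_, ?_, ?_⟩
  · intro u hu
    simp only [LA]
    rw [if_pos hu]
  · -- forcing direction
    intro f hf hfl u v huv hfe
    have aux : ∀ (u v : W) (huv : G.Adj u v),
        Fintype.equivFin W u < Fintype.equivFin W v → f u = f v → False := by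
      intro u v huv hord hfe
      refine block (f u) (P u v huv (f u)).length (hlen u v huv (f u))
        (fun m => f ((P u v huv (f u)).getVert m))
        (by simp only [Walk.getVert_zero]) (by simp only [Walk.getVert_length]; exact hfe.symm)
        ?_ ?_
      · intro m hm
        exact hf _ _ ((P u v huv (f u)).adj_getVert_succ hm)
      · intro m h1 h2
        obtain ⟨hnV, hpk⟩ := pick_spec G H VG P hpath hint hdisj huv (f u) hord h1 h2
        have hL := hfl ((P u v huv (f u)).getVert m)
        simp only [LA] at hL
        rw [if_neg hnV, hpk] at hL
        simp only [Option.elim] at hL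
        rwa [pathPos_getVert H (hpath u v huv (f u)) (le_of_lt h2)] at hL
    have hne : Fintype.equivFin W u ≠ Fintype.equivFin W v :=
      fun h => huv.ne ((Fintype.equivFin W).injective h)
    rcases lt_or_gt_of_ne hne with h | h
    · exact aux u v huv h hfe
    · exact aux v u huv.symm h hfe.symm
  · -- extension direction
    intro g hg
    refine ⟨gExt G H VG P g, ?_, ?_, ?_⟩
    · -- proper coloring of H
      intro x y hxy
      obtain ⟨u, v, huv, i, hedge⟩ := hcover x y hxy
      have main : ∀ (u v : W) (huv : G.Adj u v) (i : Fin 3),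
          Fintype.equivFin W u < Fintype.equivFin W v →
          ∀ m, m < (P u v huv i).length →
            gExt G H VG P g ((P u v huv i).getVert m) ≠
              gExt G H VG P g ((P u v huv i).getVert (m + 1)) := by
        intro u v huv i hord m hm
        have hab := hg u v huv
        have h3k := hlen u v huv i
        obtain ⟨hc0, hck, hcadj, hcmem⟩ := cExt_spec i (g u) (g v) _ h3k hab
        have hval : ∀ n, n ≤ (P u v huv i).length →
            gExt G H VG P g ((P u v huv i).getVert n) =
              cExt i (P u v huv i).length (g u) (g v) n := by
          intro n hn
          rcases (show n = 0 ∨ n = (P u v huv i).length ∨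
              (1 ≤ n ∧ n < (P u v huv i).length) by omega) with h | h | h
          · subst h
            rw [Walk.getVert_zero, hc0]
            simp only [gExt]
            rw [if_pos (hsupp u v huv).1]
          · subst h
            rw [Walk.getVert_length, hck]
            simp only [gExt]
            rw [if_pos (hsupp u v huv).2]
          · obtain ⟨hnV, hpk⟩ := pick_spec G H VG P hpath hint hdisj huv i hord h.1 h.2
            simp only [gExt]
            rw [if_neg hnV, hpk]
            simp only [Option.elim]
            rw [pathPos_getVert H (hpath u v huv i) (le_of_lt h.2)]
        rw [hval m (le_of_lt hm), hval (m + 1) (by omega)]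
        exact hcadj m hm
      have hne : Fintype.equivFin W u ≠ Fintype.equivFin W v :=
        fun h => huv.ne ((Fintype.equivFin W).injective h)
      rcases lt_or_gt_of_ne hne with hlt | hlt
      · obtain ⟨m, hm, hc⟩ := edge_consecutive (P u v huv i) hedge
        rcases hc with ⟨hx1, hy1⟩ | ⟨hy1, hx1⟩
        · rw [← hx1, ← hy1]; exact main u v huv i hlt m hm
        · rw [← hx1, ← hy1]; exact (main u v huv i hlt m hm).symm
      · have hedge' : s(x, y) ∈ (P v u huv.symm i).edges := by
          rw [hsymm u v huv i, Walk.edges_reverse, List.mem_reverse]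
          exact hedge
        obtain ⟨m, hm, hc⟩ := edge_consecutive (P v u huv.symm i) hedge'
        rcases hc with ⟨hx1, hy1⟩ | ⟨hy1, hx1⟩
        · rw [← hx1, ← hy1]; exact main v u huv.symm i hlt m hm
        · rw [← hx1, ← hy1]; exact (main v u huv.symm i hlt m hm).symm
    · -- respects the lists
      intro x
      by_cases hx : x ∈ VG
      · simp only [LA]
        rw [if_pos hx]
        exact Finset.mem_univ _
      · cases hp : pick G H P x with
        | none =>
          simp only [LA, gExt]
          rw [if_neg hx, if_neg hx, hp]
          simp only [Option.elim]
          exact Finset.mem_univ _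
        | some t =>
          obtain ⟨u, v, huv, i⟩ := t
          have hmem := pick_eq_some G H P hp
          obtain ⟨hgv, hle⟩ := pathPos_mem H hmem.2
          have h3k := hlen u v huv i
          have hab := hg u v huv
          have hm1 : 1 ≤ pathPos H (P u v huv i) x := by
            rcases Nat.eq_zero_or_pos (pathPos H (P u v huv i) x) with h | h
            · exfalso
              apply hx
              rw [← hgv, h, Walk.getVert_zero]
              exact (hsupp u v huv).1
            · exact h
          have hm2 : pathPos H (P u v huv i) x < (P u v huv i).length := by
            rcases eq_or_lt_of_le hle with h | h
            · exfalso
              apply hx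
              rw [← hgv, h, Walk.getVert_length]
              exact (hsupp u v huv).2
            · exact h
          obtain ⟨hc0, hck, hcadj, hcmem⟩ := cExt_spec i (g u) (g v) _ h3k hab
          simp only [LA, gExt]
          rw [if_neg hx, if_neg hx, hp]
          simp only [Option.elim]
          exact hcmem _ hm1 hm2
    · intro u hu
      simp only [gExt]
      rw [if_pos hu]
end

section
/- For every finite simple graph G, there exist a finite simple graph H, an injective map τ : V(H) → ℝ, and a 3-list-assignment L of H such that (H,L) is a realization of G and the ordered graph (H,τ) is M_3-free. -/
/-- `(H, τ)` contains no induced ordered copy of the ordered pattern graph `P`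
on vertices `0 < 1 < ⋯ < m - 1`. -/
def PatternFree {W : Type*} {m : ℕ} (H : SimpleGraph W) (τ : W → ℝ)
    (P : SimpleGraph (Fin m)) : Prop :=
  ¬ ∃ x : Fin m → W,
      (∀ i j : Fin m, i < j → τ (x i) < τ (x j)) ∧
      ∀ i j : Fin m, H.Adj (x i) (x j) ↔ P.Adj i j

/-- The ordered graph `M₃`: six vertices `v₁ < ⋯ < v₆` with exactly the edges
`v₁v₄`, `v₂v₅`, `v₃v₆`. -/
def M3 : SimpleGraph (Fin 6) :=
  SimpleGraph.fromEdgeSet {s(0, 3), s(1, 4), s(2, 5)}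

namespace RealM3

set_option linter.unnecessarySimpa false

structure M (n : ℕ) (Gr : ℕ → ℕ → Prop) where
  N : ℕ
  hn : n ≤ N
  lab : ℕ → ℕ
  par : ℕ → ℕ
  bst : ℕ → ℕ
  gad : ℕ → Option ℕ
  live : List ℕ
  lab_lt : ∀ k, k < N → lab k < n
  lab_orig : ∀ k, k < n → lab k = k
  par_le : ∀ k, par k ≤ k
  par_big : ∀ k, N ≤ k → par k = k
  par_root : ∀ k, k < N → par k = k → k < n
  par_lab : ∀ k, k < N → lab (par k) = lab k
  live_mem : ∀ c ∈ live, c < N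
  live_sorted : live.Pairwise (· < ·)
  live_label : ∀ v, v < n → ∃ c ∈ live, lab c = v
  bst_le : ∀ k, bst k ≤ k
  bst_iv : ∀ c k, k < N → bst k ≤ c → c ≤ k → bst c = bst k
  nest : ∀ k k', k < N → k' < N → par k < k → par k' < k' → bst k = bst k' →
    k < k' → par k' < par k
  livp : ∀ k, k < N → par k < k → ∀ c ∈ live, c ≤ par k ∨ bst k ≤ c
  notrip : ∀ k1 k2 k3, k1 < N → k2 < N → k3 < N →
    par k1 < k1 → par k2 < k2 → par k3 < k3 →
    k1 < k2 → k2 < k3 →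
    par k1 < par k2 → par k2 < par k3 → par k3 < k1 → False
  gad_ok : ∀ c w, gad c = some w → c + 1 < N ∧ lab (c + 1) = w ∧ Gr (lab c) w

variable {n : ℕ} {Gr : ℕ → ℕ → Prop}

lemma getD_rev_mem (S : List ℕ) (i : ℕ) (h : i < S.length) : S.reverse.getD i 0 ∈ S := by
  rw [List.getD_eq_getElem _ _ (by simpa using h)]
  have := List.getElem_mem (l := S.reverse) (n := i) (by simpa using h)
  simpa using this

lemma getD_rev_desc (S : List ℕ) (hS : S.Pairwise (· < ·)) (i j : ℕ) (hij : i < j)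
    (hj : j < S.length) : S.reverse.getD j 0 < S.reverse.getD i 0 := by
  have hrev : S.reverse.Pairwise (fun a b => b < a) := by
    rw [List.pairwise_reverse]; exact hS
  rw [List.getD_eq_getElem _ _ (by simpa using hj),
    List.getD_eq_getElem _ _ (by simpa using lt_trans hij hj)]
  exact List.pairwise_iff_getElem.mp hrev i j (by simpa using lt_trans hij hj)
    (by simpa using hj) hij

/-- The initial machine: one root cluster per vertex of `G`. -/
def base (n : ℕ) (Gr : ℕ → ℕ → Prop) : M n Gr where
  N := n
  hn := le_refl n
  lab := id
  par := id
  bst := fun _ => 0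
  gad := fun _ => none
  live := List.range n
  lab_lt := fun k hk => hk
  lab_orig := fun _ _ => rfl
  par_le := fun k => le_refl k
  par_big := fun _ _ => rfl
  par_root := fun k hk _ => hk
  par_lab := fun _ _ => rfl
  live_mem := fun c hc => List.mem_range.mp hc
  live_sorted := List.pairwise_lt_range
  live_label := fun v hv => ⟨v, List.mem_range.mpr hv, rfl⟩
  bst_le := fun _ => Nat.zero_le _
  bst_iv := fun _ _ _ _ _ => rfl
  nest := fun k _ _ _ h _ _ _ => absurd h (lt_irrefl k)
  livp := fun k _ h => absurd h (lt_irrefl k)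
  notrip := fun k _ _ _ _ _ h _ _ _ _ _ _ _ => absurd h (lt_irrefl k)
  gad_ok := fun _ _ h => by simp at h

section Refresh

variable (m : M n Gr) (S : List ℕ)

def rpar : ℕ → ℕ := fun k =>
  if k < m.N then m.par k else if k < m.N + S.length then S.reverse.getD (k - m.N) 0 else k

def rlab : ℕ → ℕ := fun k =>
  if k < m.N then m.lab k else if k < m.N + S.length then m.lab (S.reverse.getD (k - m.N) 0) else 0

def rbst : ℕ → ℕ := fun k =>
  if k < m.N then m.bst k else if k < m.N + S.length then m.N else k

def rgad : ℕ → Option ℕ := fun k => if k < m.N then m.gad k else none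

def rlive (P : List ℕ) : List ℕ := P ++ (List.range S.length).map (fun i => m.N + i)

lemma rpar_old {k : ℕ} (hk : k < m.N) : rpar m S k = m.par k := if_pos hk

lemma rpar_new {i : ℕ} (hi : i < S.length) :
    rpar m S (m.N + i) = S.reverse.getD i 0 := by
  simp only [rpar]
  rw [if_neg (by omega), if_pos (by omega), Nat.add_sub_cancel_left]

lemma rlab_old {k : ℕ} (hk : k < m.N) : rlab m S k = m.lab k := if_pos hk

lemma rlab_new {i : ℕ} (hi : i < S.length) :
    rlab m S (m.N + i) = m.lab (S.reverse.getD i 0) := by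
  simp only [rlab]
  rw [if_neg (by omega), if_pos (by omega), Nat.add_sub_cancel_left]

lemma rbst_old {k : ℕ} (hk : k < m.N) : rbst m S k = m.bst k := if_pos hk

lemma rbst_new {i : ℕ} (hi : i < S.length) : rbst m S (m.N + i) = m.N := by
  simp only [rbst]
  rw [if_neg (by omega), if_pos (by omega)]

variable {P : List ℕ}

lemma hSmem (hPS : m.live = P ++ S) : ∀ c ∈ S, c < m.N := fun c hc =>
  m.live_mem c (by rw [hPS]; exact List.mem_append_right P hc)

lemma hPmem (hPS : m.live = P ++ S) : ∀ c ∈ P, c < m.N := fun c hc =>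
  m.live_mem c (by rw [hPS]; exact List.mem_append_left S hc)

lemma hcross (hPS : m.live = P ++ S) : ∀ a ∈ P, ∀ b ∈ S, a < b := by
  have := m.live_sorted
  rw [hPS, List.pairwise_append] at this
  exact this.2.2

lemma hSsort (hPS : m.live = P ++ S) : S.Pairwise (· < ·) := by
  have := m.live_sorted
  rw [hPS, List.pairwise_append] at this
  exact this.2.1

lemma hPsort (hPS : m.live = P ++ S) : P.Pairwise (· < ·) := by
  have := m.live_sorted
  rw [hPS, List.pairwise_append] at this
  exact this.1

lemma hRmem (hPS : m.live = P ++ S) {i : ℕ} (hi : i < S.length) : S.reverse.getD i 0 < m.N :=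
  hSmem m S hPS _ (getD_rev_mem S i hi)

variable (P)

/-- Refreshing: repin every cluster in the suffix `S` of the live list,
rightmost first. -/
def refreshed (hPS : m.live = P ++ S) : M n Gr where
  N := m.N + S.length
  hn := m.hn.trans (Nat.le_add_right _ _)
  lab := rlab m S
  par := rpar m S
  bst := rbst m S
  gad := rgad m
  live := rlive m S P
  lab_lt := by
    intro k hk
    by_cases h : k < m.N
    · rw [rlab_old m S h]; exact m.lab_lt k h
    · have hi : k - m.N < S.length := by omega
      have hk' : k = m.N + (k - m.N) := by omega
      rw [hk', rlab_new m S hi]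
      exact m.lab_lt _ (hRmem m S hPS hi)
  lab_orig := by
    intro k hk
    rw [rlab_old m S (lt_of_lt_of_le hk m.hn)]
    exact m.lab_orig k hk
  par_le := by
    intro k
    by_cases h : k < m.N
    · rw [rpar_old m S h]; exact m.par_le k
    · by_cases h2 : k < m.N + S.length
      · have hi : k - m.N < S.length := by omega
        have hk' : k = m.N + (k - m.N) := by omega
        rw [hk', rpar_new m S hi]
        exact le_of_lt (lt_of_lt_of_le (hRmem m S hPS hi) (by omega))
      · simp only [rpar, if_neg h, if_neg h2]; exact le_refl k
  par_big := by
    intro k hk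
    simp only [rpar]
    rw [if_neg (by omega), if_neg (by omega)]
  par_root := by
    intro k hk hpar
    by_cases h : k < m.N
    · rw [rpar_old m S h] at hpar; exact m.par_root k h hpar
    · have hi : k - m.N < S.length := by omega
      have hk' : k = m.N + (k - m.N) := by omega
      rw [hk', rpar_new m S hi] at hpar
      exact absurd hpar (by have := hRmem m S hPS hi; omega)
  par_lab := by
    intro k hk
    by_cases h : k < m.N
    · rw [rpar_old m S h, rlab_old m S h, rlab_old m S (lt_of_le_of_lt (m.par_le k) h)]
      exact m.par_lab k h
    · have hi : k - m.N < S.length := by omega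
      have hk' : k = m.N + (k - m.N) := by omega
      rw [hk', rpar_new m S hi, rlab_new m S hi, rlab_old m S (hRmem m S hPS hi)]
  live_mem := by
    intro c hc
    rcases List.mem_append.mp hc with h | h
    · exact lt_of_lt_of_le (hPmem m S hPS c h) (Nat.le_add_right _ _)
    · rcases List.mem_map.mp h with ⟨i, hi, rfl⟩
      have := List.mem_range.mp hi; omega
  live_sorted := by
    rw [rlive, List.pairwise_append]
    refine ⟨hPsort m S hPS, ?_, ?_⟩
    · rw [List.pairwise_map]
      exact List.pairwise_lt_range.imp (by omega)
    · intro a ha b hb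
      rcases List.mem_map.mp hb with ⟨i, _, rfl⟩
      exact lt_of_lt_of_le (hPmem m S hPS a ha) (Nat.le_add_right _ _)
  live_label := by
    intro v hv
    rcases m.live_label v hv with ⟨c, hc, hlab⟩
    rw [hPS] at hc
    rcases List.mem_append.mp hc with h | h
    · exact ⟨c, List.mem_append_left _ h, by
        rw [rlab_old m S (hPmem m S hPS c h)]; exact hlab⟩
    · have : c ∈ S.reverse := List.mem_reverse.mpr h
      rcases List.mem_iff_getElem.mp this with ⟨i, hi, hget⟩
      have hi' : i < S.length := by simpa using hi
      refine ⟨m.N + i, List.mem_append_right _ ?_, ?_⟩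
      · exact List.mem_map.mpr ⟨i, List.mem_range.mpr hi', rfl⟩
      · rw [rlab_new m S hi', List.getD_eq_getElem _ _ hi, hget, hlab]
  bst_le := by
    intro k
    by_cases h : k < m.N
    · rw [rbst_old m S h]; exact m.bst_le k
    · by_cases h2 : k < m.N + S.length
      · simp only [rbst]; rw [if_neg h, if_pos h2]; omega
      · simp only [rbst]; rw [if_neg h, if_neg h2]
  bst_iv := by
    intro c k hk hbc hck
    by_cases h : k < m.N
    · rw [rbst_old m S h] at hbc ⊢
      rw [rbst_old m S (by omega)]
      exact m.bst_iv c k h hbc hck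
    · have hbk : rbst m S k = m.N := by
        simp only [rbst]; rw [if_neg h, if_pos (by omega)]
      rw [hbk] at hbc ⊢
      simp only [rbst]; rw [if_neg (by omega), if_pos (by omega)]
  nest := by
    intro k k' hk hk' hp hp' hb hkk
    by_cases h' : k' < m.N
    · have h : k < m.N := lt_trans hkk h'
      rw [rpar_old m S h] at hp ⊢
      rw [rpar_old m S h'] at hp' ⊢
      rw [rbst_old m S h, rbst_old m S h'] at hb
      exact m.nest k k' h h' hp hp' hb hkk
    · by_cases h : k < m.N
      · exfalso
        rw [rbst_old m S h] at hb
        have : rbst m S k' = m.N := by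
          simp only [rbst]; rw [if_neg h', if_pos (by omega)]
        rw [this] at hb
        have := m.bst_le k; omega
      · have hik : k - m.N < S.length := by omega
        have hik' : k' - m.N < S.length := by omega
        have e1 : k = m.N + (k - m.N) := by omega
        have e2 : k' = m.N + (k' - m.N) := by omega
        rw [e1, rpar_new m S hik]
        rw [e2, rpar_new m S hik']
        exact getD_rev_desc S (hSsort m S hPS) _ _ (by omega) hik'
  livp := by
    intro k hk hp c hc
    rcases List.mem_append.mp hc with hcP | hcF
    · by_cases h : k < m.N
      · rw [rpar_old m S h] at hp ⊢
        rw [rbst_old m S h]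
        exact m.livp k h hp c (by rw [hPS]; exact List.mem_append_left S hcP)
      · have hik : k - m.N < S.length := by omega
        have e1 : k = m.N + (k - m.N) := by omega
        rw [e1, rpar_new m S hik]
        left
        exact le_of_lt (hcross m S hPS c hcP _ (getD_rev_mem S _ hik))
    · rcases List.mem_map.mp hcF with ⟨i, hi, rfl⟩
      right
      by_cases h : k < m.N
      · rw [rbst_old m S h]
        have := m.bst_le k; omega
      · have e1 : k = m.N + (k - m.N) := by omega
        rw [e1, rbst_new m S (by omega)]
        omega
  notrip := by
    intro k1 k2 k3 h1 h2 h3 hp1 hp2 hp3 h12 h23 q12 q23 q31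
    by_cases c3 : k3 < m.N
    · have c2 : k2 < m.N := lt_trans h23 c3
      have c1 : k1 < m.N := lt_trans h12 c2
      rw [rpar_old m S c1] at hp1 q12
      rw [rpar_old m S c2] at hp2 q12 q23
      rw [rpar_old m S c3] at hp3 q23 q31
      exact m.notrip k1 k2 k3 c1 c2 c3 hp1 hp2 hp3 h12 h23 q12 q23 q31
    · by_cases c2 : k2 < m.N
      · -- k3 new, k1 k2 old
        have c1 : k1 < m.N := lt_trans h12 c2
        have hik3 : k3 - m.N < S.length := by omega
        have e3 : k3 = m.N + (k3 - m.N) := by omega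
        rw [rpar_old m S c1] at hp1 q12
        rw [rpar_old m S c2] at hp2 q12 q23
        rw [e3, rpar_new m S hik3] at q23 q31
        set p3 := S.reverse.getD (k3 - m.N) 0 with hp3def
        have hp3mem : p3 ∈ m.live := by
          rw [hPS]; exact List.mem_append_right P (getD_rev_mem S _ hik3)
        rcases m.livp k2 c2 hp2 p3 hp3mem with hle | hbst
        · omega
        · have hbiv : m.bst k1 = m.bst k2 :=
            m.bst_iv k1 k2 c2 (by omega) (le_of_lt h12)
          have := m.nest k1 k2 c1 c2 hp1 hp2 hbiv h12
          omega
      · -- k2, k3 both new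
        have hik2 : k2 - m.N < S.length := by omega
        have hik3 : k3 - m.N < S.length := by omega
        have e2 : k2 = m.N + (k2 - m.N) := by omega
        have e3 : k3 = m.N + (k3 - m.N) := by omega
        rw [e2, rpar_new m S hik2] at q23
        rw [e3, rpar_new m S hik3] at q23
        have := getD_rev_desc S (hSsort m S hPS) (k2 - m.N) (k3 - m.N) (by omega) hik3
        omega
  gad_ok := by
    intro c w hgw
    simp only [rgad] at hgw
    by_cases h : c < m.N
    · rw [if_pos h] at hgw
      obtain ⟨hc1, hc2, hc3⟩ := m.gad_ok c w hgw
      exact ⟨by omega, by rw [rlab_old m S hc1]; exact hc2,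
        by rw [rlab_old m S h]; exact hc3⟩
    · rw [if_neg h] at hgw; exact absurd hgw (by simp)

end Refresh

section Refresh2

variable (m : M n Gr) (S P : List ℕ) (hPS : m.live = P ++ S)

lemma refreshed_N : (refreshed m S P hPS).N = m.N + S.length := rfl

lemma refreshed_live :
    (refreshed m S P hPS).live = P ++ (List.range S.length).map (fun i => m.N + i) := rfl

lemma refreshed_lab_old {k : ℕ} (hk : k < m.N) :
    (refreshed m S P hPS).lab k = m.lab k := rlab_old m S hk

lemma refreshed_lab_new {i : ℕ} (hi : i < S.length) :
    (refreshed m S P hPS).lab (m.N + i) = m.lab (S.reverse.getD i 0) := rlab_new m S hi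

lemma refreshed_par_new {i : ℕ} (hi : i < S.length) :
    (refreshed m S P hPS).par (m.N + i) = S.reverse.getD i 0 := rpar_new m S hi

lemma refreshed_gad_old {k : ℕ} (hk : k < m.N) :
    (refreshed m S P hPS).gad k = m.gad k := if_pos hk

end Refresh2

/-- Mark a difference gadget between clusters `c` and `c + 1`. -/
def marked (m : M n Gr) (c w : ℕ) (h1 : c + 1 < m.N) (h2 : m.lab (c + 1) = w)
    (h3 : Gr (m.lab c) w) : M n Gr :=
  { m with
    gad := Function.update m.gad c (some w)
    gad_ok := by
      intro c' w' h
      rcases eq_or_ne c' c with rfl | hne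
      · rw [Function.update_self] at h
        obtain rfl : w = w' := by injection h
        exact ⟨h1, h2, h3⟩
      · rw [Function.update_of_ne hne] at h
        exact m.gad_ok c' w' h }

lemma marked_N (m : M n Gr) (c w h1 h2 h3) : (marked m c w h1 h2 h3).N = m.N := rfl

lemma marked_lab (m : M n Gr) (c w h1 h2 h3) : (marked m c w h1 h2 h3).lab = m.lab := rfl

lemma marked_gad_self (m : M n Gr) (c w h1 h2 h3) :
    (marked m c w h1 h2 h3).gad c = some w := Function.update_self _ _ _

lemma marked_gad_other (m : M n Gr) (c w h1 h2 h3) {k : ℕ} (hk : k ≠ c) :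
    (marked m c w h1 h2 h3).gad k = m.gad k := Function.update_of_ne hk _ _

/-- Extension order on machines: old clusters keep their labels and gadgets. -/
def Ext (m m' : M n Gr) : Prop :=
  m.N ≤ m'.N ∧ ∀ k, k < m.N → m'.lab k = m.lab k ∧ m'.gad k = m.gad k

lemma ext_refl (m : M n Gr) : Ext m m := ⟨le_refl _, fun _ _ => ⟨Eq.refl _, Eq.refl _⟩⟩

lemma Ext.trans {m1 m2 m3 : M n Gr} (h1 : Ext m1 m2) (h2 : Ext m2 m3) : Ext m1 m3 :=
  ⟨h1.1.trans h2.1, fun k hk =>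
    ⟨((h2.2 k (lt_of_lt_of_le hk h1.1)).1).trans (h1.2 k hk).1,
     ((h2.2 k (lt_of_lt_of_le hk h1.1)).2).trans (h1.2 k hk).2⟩⟩

lemma refreshed_ext (m : M n Gr) (S P : List ℕ) (hPS : m.live = P ++ S) :
    Ext m (refreshed m S P hPS) :=
  ⟨Nat.le_add_right _ _, fun k hk =>
    ⟨refreshed_lab_old m S P hPS hk, refreshed_gad_old m S P hPS hk⟩⟩

lemma getD_snoc (L : List ℕ) (a : ℕ) : (L ++ [a]).getD L.length 0 = a := by
  rw [List.getD_eq_getElem _ _ (by simp)]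
  simp

lemma getD_snoc2 (L : List ℕ) (a b : ℕ) : (L ++ [a] ++ [b]).getD L.length 0 = a := by
  rw [List.append_assoc, List.getD_eq_getElem _ _ (by simp)]
  rw [List.getElem_append_right (le_refl _)]
  simp

/-- Process one edge: three suffix refreshes put fresh copies of the endpoints
side by side, then mark the gadget. -/
lemma addEdge_core (m : M n Gr) (al be x y : ℕ) (A D1 D2 : List ℕ)
    (hlive : m.live = A ++ x :: (D1 ++ y :: D2))
    (hlx : m.lab x = al) (hly : m.lab y = be) (hg : Gr be al) :
    ∃ m' : M n Gr, Ext m m' ∧ ∃ c, c + 1 < m'.N ∧ m'.gad c = some al ∧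
      m'.lab c = be ∧ m'.lab (c + 1) = al := by
  classical
  have hx : x < m.N := m.live_mem x (by rw [hlive]; simp)
  have hy : y < m.N := m.live_mem y (by rw [hlive]; simp)
  -- step 1: flip the part from y on
  have h1 : m.live = (A ++ x :: D1) ++ (y :: D2) := by rw [hlive]; simp
  set m1 := refreshed m (y :: D2) (A ++ x :: D1) h1 with hm1
  have hN1 : m1.N = m.N + (D2.length + 1) := by
    rw [hm1, refreshed_N]; simp
  set y1 := m.N + D2.length with hy1def
  have hy1lt : y1 < m1.N := by omega
  have hgety : (y :: D2).reverse.getD D2.length 0 = y := by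
    rw [List.reverse_cons]
    have := getD_snoc D2.reverse y
    simpa using this
  have hlaby1 : m1.lab y1 = be := by
    rw [hy1def, hm1, refreshed_lab_new m _ _ h1 (by simp), hgety, hly]
  -- step 2: flip everything strictly after x
  set F1 := (List.range (D2.length + 1)).map (fun i => m.N + i) with hF1
  have h2 : m1.live = (A ++ [x]) ++ (D1 ++ F1) := by
    rw [hm1, refreshed_live]
    simp [hF1]
  set m2 := refreshed m1 (D1 ++ F1) (A ++ [x]) h2 with hm2
  have hlen1 : F1.length = D2.length + 1 := by simp [hF1]
  have hN2 : m2.N = m1.N + (D1.length + F1.length) := by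
    rw [hm2, refreshed_N]; simp
  have hF1last : F1 = (List.range D2.length).map (fun i => m.N + i) ++ [y1] := by
    rw [hF1, List.range_succ, List.map_append]
    simp [hy1def]
  have hget2 : (D1 ++ F1).reverse.getD 0 0 = y1 := by
    rw [List.reverse_append, hF1last, List.reverse_append]
    simp
  have hlabz : m2.lab m1.N = be := by
    have h0 : (0:ℕ) < (D1 ++ F1).length := by
      simp only [List.length_append, hlen1]; omega
    have h' := refreshed_lab_new m1 (D1 ++ F1) (A ++ [x]) h2 (i := 0) h0
    rw [hget2, Nat.add_zero] at h'
    rw [hm2, h']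
    exact hlaby1
  have hlabx2 : m2.lab x = al := by
    rw [hm2, refreshed_lab_old m1 _ _ h2 (by omega), hm1,
      refreshed_lab_old m _ _ h1 hx, hlx]
  -- step 3: flip from x on
  set F2 := (List.range (D1.length + F1.length)).map (fun i => m1.N + i) with hF2
  have hlen2 : F2.length = D1.length + F1.length := by simp [hF2]
  have hlen2pos : 1 ≤ F2.length := by simp [hlen2, hlen1]; omega
  have h3 : m2.live = A ++ (x :: F2) := by
    rw [hm2, refreshed_live]
    simp [hF2]
  set m3 := refreshed m2 (x :: F2) A h3 with hm3
  have hN3 : m3.N = m2.N + (F2.length + 1) := by rw [hm3, refreshed_N]; simp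
  have hget3 : (x :: F2).reverse.getD F2.length 0 = x := by
    rw [List.reverse_cons]
    have := getD_snoc F2.reverse x
    simpa using this
  have hF2head : F2 = m1.N :: (List.range (D1.length + F1.length - 1)).map
      (fun i => m1.N + (i + 1)) := by
    rw [hF2]
    have : D1.length + F1.length = (D1.length + F1.length - 1) + 1 := by
      simp [hlen1]; omega
    rw [this, List.range_succ_eq_map]
    simp [Function.comp]
  have hget4 : (x :: F2).reverse.getD (F2.length - 1) 0 = m1.N := by
    rw [hF2head]
    set L := (List.range (D1.length + F1.length - 1)).map (fun i => m1.N + (i + 1)) with hL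
    have e1 : (x :: (m1.N :: L)).reverse = L.reverse ++ [m1.N] ++ [x] := by simp
    have e2 : (m1.N :: L).length - 1 = L.reverse.length := by simp
    rw [e1, e2, getD_snoc2]
  have hlab3last : m3.lab (m2.N + F2.length) = al := by
    rw [hm3, refreshed_lab_new m2 _ _ h3
      (by simp only [List.length_cons]; omega), hget3]
    exact hlabx2
  have hlab3c : m3.lab (m2.N + (F2.length - 1)) = be := by
    rw [hm3, refreshed_lab_new m2 _ _ h3
      (by simp only [List.length_cons]; omega), hget4]
    exact hlabz
  set c := m2.N + (F2.length - 1) with hc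
  have hc1 : c + 1 = m2.N + F2.length := by omega
  have hcN : c + 1 < m3.N := by omega
  have hlabc1 : m3.lab (c + 1) = al := by rw [hc1]; exact hlab3last
  refine ⟨marked m3 c al hcN hlabc1 (by rw [hlab3c]; exact hg), ?_, c, ?_, ?_, ?_, ?_⟩
  · constructor
    · show m.N ≤ m3.N
      omega
    · intro k hk
      constructor
      · show m3.lab k = m.lab k
        rw [hm3, refreshed_lab_old m2 _ _ h3 (by omega), hm2,
          refreshed_lab_old m1 _ _ h2 (by omega), hm1,
          refreshed_lab_old m _ _ h1 hk]
      · show (marked m3 c al hcN hlabc1 _).gad k = m.gad k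
        rw [marked_gad_other m3 c al hcN hlabc1 _ (by omega), hm3,
          refreshed_gad_old m2 _ _ h3 (by omega), hm2,
          refreshed_gad_old m1 _ _ h2 (by omega), hm1,
          refreshed_gad_old m _ _ h1 hk]
  · show c + 1 < m3.N
    exact hcN
  · exact marked_gad_self m3 c al hcN hlabc1 _
  · show m3.lab c = be
    exact hlab3c
  · show m3.lab (c + 1) = al
    exact hlabc1

lemma addEdge (m : M n Gr) (a b : ℕ) (ha : a < n) (hb : b < n) (hab : a ≠ b)
    (g1 : Gr a b) (g2 : Gr b a) :
    ∃ m' : M n Gr, Ext m m' ∧ ∃ c w, c + 1 < m'.N ∧ m'.gad c = some w ∧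
      ((m'.lab c = a ∧ m'.lab (c + 1) = b) ∨ (m'.lab c = b ∧ m'.lab (c + 1) = a)) := by
  obtain ⟨x, hxmem, hlx⟩ := m.live_label a ha
  obtain ⟨A, D, hAD⟩ := List.append_of_mem hxmem
  obtain ⟨y, hymem, hly⟩ := m.live_label b hb
  have hyx : y ≠ x := fun h => hab (by rw [← hlx, ← hly, h])
  rw [hAD] at hymem
  rcases List.mem_append.mp hymem with hyA | hyD
  · obtain ⟨A1, A2, hA⟩ := List.append_of_mem hyA
    have hlive : m.live = A1 ++ y :: (A2 ++ x :: D) := by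
      rw [hAD, hA]; simp
    obtain ⟨m', hext, c, h1, h2, h3, h4⟩ :=
      addEdge_core m b a y x A1 A2 D hlive hly hlx g1
    exact ⟨m', hext, c, b, h1, h2, Or.inl ⟨h3, h4⟩⟩
  · have hyD' : y ∈ D := by
      rcases List.mem_cons.mp hyD with h | h
      · exact absurd h hyx
      · exact h
    obtain ⟨D1, D2, hD⟩ := List.append_of_mem hyD'
    have hlive : m.live = A ++ x :: (D1 ++ y :: D2) := by
      rw [hAD, hD]
    obtain ⟨m', hext, c, h1, h2, h3, h4⟩ :=
      addEdge_core m a b x y A D1 D2 hlive hlx hly g2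
    exact ⟨m', hext, c, a, h1, h2, Or.inr ⟨h3, h4⟩⟩

lemma machine_exists (l : List (ℕ × ℕ))
    (hl : ∀ p ∈ l, p.1 < n ∧ p.2 < n ∧ p.1 ≠ p.2 ∧ Gr p.1 p.2 ∧ Gr p.2 p.1) :
    ∃ m : M n Gr, ∀ p ∈ l, ∃ c w, c + 1 < m.N ∧ m.gad c = some w ∧
      ((m.lab c = p.1 ∧ m.lab (c + 1) = p.2) ∨
        (m.lab c = p.2 ∧ m.lab (c + 1) = p.1)) := by
  induction l with
  | nil => exact ⟨base n Gr, by simp⟩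
  | cons p t ih =>
    obtain ⟨mt, hmt⟩ := ih (fun q hq => hl q (List.mem_cons_of_mem p hq))
    obtain ⟨h1, h2, h3, h4, h5⟩ := hl p List.mem_cons_self
    obtain ⟨m', hext, c, w, hc1, hc2, hc3⟩ := addEdge mt p.1 p.2 h1 h2 h3 h4 h5
    refine ⟨m', ?_⟩
    intro q hq
    rcases List.mem_cons.mp hq with rfl | hqt
    · exact ⟨c, w, hc1, hc2, hc3⟩
    · obtain ⟨c', w', hd1, hd2, hd3⟩ := hmt q hqt
      have hcm : c' + 1 < mt.N := hd1
      have hc'lt : c' < mt.N := by omega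
      have hc1lt : c' + 1 < m'.N := lt_of_lt_of_le hd1 hext.1
      refine ⟨c', w', hc1lt, ?_, ?_⟩
      · rw [(hext.2 c' hc'lt).2]; exact hd2
      · rw [(hext.2 c' hc'lt).1, (hext.2 (c' + 1) hcm).1]
        exact hd3

/-! ### The ordered graph of a machine -/

abbrev VW (m : M n Gr) := Fin m.N × Fin 3

def tau (m : M n Gr) : VW m → ℝ := fun w => (((w.1 : ℕ) * 3 + (w.2 : ℕ) : ℕ) : ℝ)

/-- Base relation: triangles in each cluster, pin edges, gadget edges. -/
def Rl (m : M n Gr) : VW m → VW m → Prop := fun a b =>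
  ((a.1 : ℕ) = (b.1 : ℕ) ∧ a.2 ≠ b.2) ∨
  (m.par (b.1 : ℕ) = (a.1 : ℕ) ∧ (a.1 : ℕ) ≠ (b.1 : ℕ) ∧ (b.2 : ℕ) = 0 ∧ (a.2 : ℕ) ≠ 0) ∨
  (m.gad (a.1 : ℕ) ≠ none ∧ (b.1 : ℕ) = (a.1 : ℕ) + 1 ∧ (a.2 : ℕ) = 1 ∧ (b.2 : ℕ) ≠ 0)

def HG (m : M n Gr) : SimpleGraph (VW m) := SimpleGraph.fromRel (Rl m)

lemma tau_inj (m : M n Gr) : Function.Injective (tau m) := by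
  intro a b h
  have h' : (a.1 : ℕ) * 3 + (a.2 : ℕ) = (b.1 : ℕ) * 3 + (b.2 : ℕ) := Nat.cast_injective h
  have ha2 := a.2.isLt
  have hb2 := b.2.isLt
  have h1 : (a.1 : ℕ) = (b.1 : ℕ) := by omega
  have h2 : (a.2 : ℕ) = (b.2 : ℕ) := by omega
  exact Prod.ext (Fin.ext h1) (Fin.ext h2)

lemma tau_lt_iff (m : M n Gr) (a b : VW m) :
    tau m a < tau m b ↔ (a.1 : ℕ) * 3 + (a.2 : ℕ) < (b.1 : ℕ) * 3 + (b.2 : ℕ) := by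
  unfold tau
  exact Nat.cast_lt

lemma hg_adj (m : M n Gr) (a b : VW m) :
    (HG m).Adj a b ↔ a ≠ b ∧ (Rl m a b ∨ Rl m b a) := by
  simp [HG, SimpleGraph.fromRel_adj]

/-- The crucial combinatorial fact: the ordered graph of a machine has no
induced ordered `M₃`. -/
theorem pattern_free (m : M n Gr) : PatternFree (HG m) (tau m) M3 := by
  rintro ⟨x, hord, hadj⟩
  -- M₃ adjacency description
  have hM3 : ∀ i j : Fin 6, M3.Adj i j →
      (i = 0 ∧ j = 3) ∨ (i = 3 ∧ j = 0) ∨ (i = 1 ∧ j = 4) ∨ (i = 4 ∧ j = 1) ∨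
      (i = 2 ∧ j = 5) ∨ (i = 5 ∧ j = 2) := by
    intro i j h
    rw [M3, SimpleGraph.fromEdgeSet_adj] at h
    obtain ⟨hs, -⟩ := h
    simp only [Set.mem_insert_iff, Set.mem_singleton_iff, Sym2.eq_iff] at hs
    tauto
  have hM3pos : M3.Adj 0 3 ∧ M3.Adj 1 4 ∧ M3.Adj 2 5 := by
    refine ⟨?_, ?_, ?_⟩ <;>
    · rw [M3, SimpleGraph.fromEdgeSet_adj]
      constructor
      · simp only [Set.mem_insert_iff, Set.mem_singleton_iff, Sym2.eq_iff]
        tauto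
      · decide
  -- distinctness
  have hxne : ∀ i j : Fin 6, i < j → x i ≠ x j := by
    intro i j hij h
    have := hord i j hij
    rw [h] at this
    exact lt_irrefl _ this
  -- same cluster implies M3-adjacency
  have lemA : ∀ i j : Fin 6, i < j → ((x i).1 : ℕ) = ((x j).1 : ℕ) → M3.Adj i j := by
    intro i j hij heq
    have hne := hxne i j hij
    have hs : (x i).2 ≠ (x j).2 := by
      intro h2
      exact hne (Prod.ext (Fin.ext heq) h2)
    exact (hadj i j).mp ((hg_adj m _ _).mpr ⟨hne, Or.inl (Or.inl ⟨heq, hs⟩)⟩)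
  -- no two pattern vertices share a cluster
  have keyA : ∀ i j : Fin 6, i < j → ((x i).1 : ℕ) = ((x j).1 : ℕ) → False := by
    intro i j hij heq
    have hM := hM3 i j (lemA i j hij heq)
    -- helper: a vertex strictly tau-between two same-cluster vertices shares the cluster
    have between : ∀ t : Fin 6, i < t → t < j → ((x t).1 : ℕ) = ((x i).1 : ℕ) ∨
        ((x t).1 : ℕ) = ((x j).1 : ℕ) := by
      intro t h1 h2
      have o1 := (tau_lt_iff m _ _).mp (hord i t h1)
      have o2 := (tau_lt_iff m _ _).mp (hord t j h2)
      have e2 := ((x t).2).isLt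
      have ei2 := ((x i).2).isLt
      have ej2 := ((x j).2).isLt
      left
      omega
    rcases hM with ⟨hi, hj⟩ | ⟨hi, hj⟩ | ⟨hi, hj⟩ | ⟨hi, hj⟩ | ⟨hi, hj⟩ | ⟨hi, hj⟩ <;>
      subst hi <;> subst hj
    -- goals: (0,3), (3,0), (1,4), (4,1), (2,5), (5,2)
    case _ =>
      rcases between 1 (by decide) (by decide) with h | h
      · have := lemA 0 1 (by decide) h.symm
        rcases hM3 _ _ this with h|h|h|h|h|h <;> exact absurd h (by decide)
      · have := lemA 1 3 (by decide) h
        rcases hM3 _ _ this with h|h|h|h|h|h <;> exact absurd h (by decide)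
    case _ => exact absurd hij (by decide)
    case _ =>
      rcases between 2 (by decide) (by decide) with h | h
      · have := lemA 1 2 (by decide) h.symm
        rcases hM3 _ _ this with h|h|h|h|h|h <;> exact absurd h (by decide)
      · have := lemA 2 4 (by decide) h
        rcases hM3 _ _ this with h|h|h|h|h|h <;> exact absurd h (by decide)
    case _ => exact absurd hij (by decide)
    case _ =>
      rcases between 3 (by decide) (by decide) with h | h
      · have := lemA 2 3 (by decide) h.symm
        rcases hM3 _ _ this with h|h|h|h|h|h <;> exact absurd h (by decide)
      · have := lemA 3 5 (by decide) h
        rcases hM3 _ _ this with h|h|h|h|h|h <;> exact absurd h (by decide)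
    case _ => exact absurd hij (by decide)
  -- strict cluster monotonicity
  have hmono : ∀ i j : Fin 6, i < j → ((x i).1 : ℕ) < ((x j).1 : ℕ) := by
    intro i j hij
    have o := (tau_lt_iff m _ _).mp (hord i j hij)
    have e2 := ((x i).2).isLt
    have e3 := ((x j).2).isLt
    have hle : ((x i).1 : ℕ) ≤ ((x j).1 : ℕ) := by omega
    rcases lt_or_eq_of_le hle with h | h
    · exact h
    · exact absurd h (fun h => keyA i j hij h)
  -- each pattern edge is a pin edge
  have pinOf : ∀ i j t : Fin 6, i < j → i < t → t < j → (HG m).Adj (x i) (x j) →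
      m.par ((x j).1 : ℕ) = ((x i).1 : ℕ) := by
    intro i j t hij hit htj hA
    obtain ⟨hne, hrel⟩ := (hg_adj m _ _).mp hA
    have hij' := hmono i j hij
    have g1 := hmono i t hit
    have g2 := hmono t j htj
    rcases hrel with h | h
    · rcases h with ⟨h1, _⟩ | ⟨h1, h2, h3, h4⟩ | ⟨h1, h2, h3, h4⟩
      · exact absurd h1 (by omega)
      · exact h1
      · omega
    · rcases h with ⟨h1, _⟩ | ⟨h1, h2, h3, h4⟩ | ⟨h1, h2, h3, h4⟩
      · exact absurd h1 (by omega)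
      · have := m.par_le ((x i).1 : ℕ)
        omega
      · omega
  have e03 := pinOf 0 3 1 (by decide) (by decide) (by decide) ((hadj 0 3).mpr hM3pos.1)
  have e14 := pinOf 1 4 2 (by decide) (by decide) (by decide) ((hadj 1 4).mpr hM3pos.2.1)
  have e25 := pinOf 2 5 3 (by decide) (by decide) (by decide) ((hadj 2 5).mpr hM3pos.2.2)
  exact m.notrip ((x 3).1 : ℕ) ((x 4).1 : ℕ) ((x 5).1 : ℕ)
    (x 3).1.isLt (x 4).1.isLt (x 5).1.isLt
    (by rw [e03]; exact hmono 0 3 (by decide))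
    (by rw [e14]; exact hmono 1 4 (by decide))
    (by rw [e25]; exact hmono 2 5 (by decide))
    (hmono 3 4 (by decide)) (hmono 4 5 (by decide))
    (by rw [e03, e14]; exact hmono 0 1 (by decide))
    (by rw [e14, e25]; exact hmono 1 2 (by decide))
    (by rw [e25]; exact hmono 2 3 (by decide))

/-! ### Coloring semantics -/

lemma fin3_force (a b c d : Fin 3) : b ≠ c → a ≠ b → a ≠ c → d ≠ b → d ≠ c → d = a := by
  have : ∀ a b c d : Fin 3,
      (b ≠ c ∧ a ≠ b ∧ a ≠ c ∧ d ≠ b ∧ d ≠ c) → d = a := by decide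
  intro h1 h2 h3 h4 h5
  exact this a b c d ⟨h1, h2, h3, h4, h5⟩

def other : Fin 3 → Fin 3 := fun a => if a = 0 then 1 else 0

def third : Fin 3 → Fin 3 → Fin 3 := fun a b =>
  if (0 : Fin 3) ≠ a ∧ (0 : Fin 3) ≠ b then 0
  else if (1 : Fin 3) ≠ a ∧ (1 : Fin 3) ≠ b then 1 else 2

lemma other_ne : ∀ a : Fin 3, other a ≠ a := by decide

lemma third_ne1 : ∀ a b : Fin 3, a ≠ b → third a b ≠ a := by
  have : ∀ a b : Fin 3, ¬(a = b) → ¬(third a b = a) := by decide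
  exact this

lemma third_ne2 : ∀ a b : Fin 3, a ≠ b → third a b ≠ b := by
  have : ∀ a b : Fin 3, ¬(a = b) → ¬(third a b = b) := by decide
  exact this

lemma slot_cases : ∀ s : Fin 3, s = 0 ∨ s = 1 ∨ s = 2 := by decide

section Semantics

variable (m : M n Gr)

lemma adjv (a b : VW m) (hne : a ≠ b) (h : Rl m a b) : (HG m).Adj a b :=
  (hg_adj m a b).mpr ⟨hne, Or.inl h⟩

lemma tri (f : VW m → Fin 3) (hf : ∀ a b, (HG m).Adj a b → f a ≠ f b)
    (k : Fin m.N) (s s' : Fin 3) (hss : s ≠ s') : f (k, s) ≠ f (k, s') :=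
  hf _ _ (adjv m (k, s) (k, s') (fun h => hss (congrArg Prod.snd h)) (Or.inl ⟨rfl, hss⟩))

lemma fcongr (f : VW m → Fin 3) {a b : ℕ} (ha : a < m.N) (hb : b < m.N) (h : a = b)
    (s : Fin 3) : f (⟨a, ha⟩, s) = f (⟨b, hb⟩, s) := by subst h; rfl

/-- Values propagate along pin chains back to the original cluster. -/
lemma chain (f : VW m → Fin 3) (hf : ∀ a b, (HG m).Adj a b → f a ≠ f b) :
    ∀ k, ∀ hk : k < m.N,
    f (⟨k, hk⟩, 0) = f (⟨m.lab k, lt_of_lt_of_le (m.lab_lt k hk) m.hn⟩, 0) := by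
  intro k
  induction k using Nat.strong_induction_on with
  | _ k ih =>
    intro hk
    by_cases hroot : m.par k = k
    · exact fcongr m f hk _ (m.lab_orig k (m.par_root k hk hroot)).symm 0
    · have hplt : m.par k < k := lt_of_le_of_ne (m.par_le k) hroot
      have hpN : m.par k < m.N := lt_trans hplt hk
      have hpin : ∀ s : Fin 3, (s : ℕ) ≠ 0 → f (⟨k, hk⟩, 0) ≠ f (⟨m.par k, hpN⟩, s) := by
        intro s hs
        have hA := adjv m (⟨m.par k, hpN⟩, s) (⟨k, hk⟩, 0)
          (by
            intro h
            have := congrArg (fun w => (w.1 : ℕ)) h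
            simp only at this
            omega)
          (Or.inr (Or.inl ⟨rfl, by simp only; omega, rfl, hs⟩))
        exact fun h => hf _ _ hA (h.symm)
      have h1 : f (⟨k, hk⟩, 0) = f (⟨m.par k, hpN⟩, 0) := by
        refine fin3_force (f (⟨m.par k, hpN⟩, 0)) (f (⟨m.par k, hpN⟩, 1))
          (f (⟨m.par k, hpN⟩, 2)) (f (⟨k, hk⟩, 0)) ?_ ?_ ?_ ?_ ?_
        · exact tri m f hf _ 1 2 (by decide)
        · exact tri m f hf _ 0 1 (by decide)
        · exact tri m f hf _ 0 2 (by decide)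
        · exact hpin 1 (by decide)
        · exact hpin 2 (by decide)
      rw [h1, ih (m.par k) hplt hpN]
      exact fcongr m f _ _ (m.par_lab k hk) 0

/-- The gadget forces different values on the two adjacent clusters. -/
lemma gad_neq (f : VW m → Fin 3) (hf : ∀ a b, (HG m).Adj a b → f a ≠ f b)
    (c w : ℕ) (hgw : m.gad c = some w) (hc : c < m.N) (hc1 : c + 1 < m.N) :
    f (⟨c, hc⟩, 0) ≠ f (⟨c + 1, hc1⟩, 0) := by
  have hgadj : ∀ s : Fin 3, (s : ℕ) ≠ 0 → f (⟨c, hc⟩, 1) ≠ f (⟨c + 1, hc1⟩, s) := by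
    intro s hs
    refine hf _ _ (adjv m (⟨c, hc⟩, 1) (⟨c + 1, hc1⟩, s) ?_ ?_)
    · intro h
      have := congrArg (fun w => (w.1 : ℕ)) h
      simp only at this
      omega
    · refine Or.inr (Or.inr ⟨?_, by simp only, rfl, hs⟩)
      rw [hgw]; simp
  have h1 : f (⟨c, hc⟩, 1) = f (⟨c + 1, hc1⟩, 0) := by
    refine fin3_force (f (⟨c + 1, hc1⟩, 0)) (f (⟨c + 1, hc1⟩, 1))
      (f (⟨c + 1, hc1⟩, 2)) (f (⟨c, hc⟩, 1)) ?_ ?_ ?_ ?_ ?_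
    · exact tri m f hf _ 1 2 (by decide)
    · exact tri m f hf _ 0 1 (by decide)
    · exact tri m f hf _ 0 2 (by decide)
    · exact hgadj 1 (by decide)
    · exact hgadj 2 (by decide)
  rw [← h1]
  exact fun h => tri m f hf ⟨c, hc⟩ 0 1 (by decide) h

end Semantics

section Complete

variable (m : M n Gr) (g' : ℕ → Fin 3)

def aCol (k : ℕ) : Fin 3 := (m.gad k).elim (other (g' (m.lab k))) g'

def bCol (k : ℕ) : Fin 3 := third (g' (m.lab k)) (aCol m g' k)

def fCol : VW m → Fin 3 := fun w =>
  if (w.2 : ℕ) = 0 then g' (m.lab (w.1 : ℕ))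
  else if (w.2 : ℕ) = 1 then aCol m g' (w.1 : ℕ) else bCol m g' (w.1 : ℕ)

lemma fCol_eval0 (k : Fin m.N) : fCol m g' (k, 0) = g' (m.lab (k : ℕ)) := by
  simp [fCol]

lemma fCol_eval1 (k : Fin m.N) : fCol m g' (k, 1) = aCol m g' (k : ℕ) := by
  simp [fCol]

lemma fCol_eval2 (k : Fin m.N) : fCol m g' (k, 2) = bCol m g' (k : ℕ) := by
  simp [fCol]

lemma aCol_ne (hg' : ∀ a b, Gr a b → g' a ≠ g' b) (k : ℕ) :
    aCol m g' k ≠ g' (m.lab k) := by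
  rcases h : m.gad k with _ | w
  · simp only [aCol, h, Option.elim]
    exact other_ne _
  · simp only [aCol, h, Option.elim]
    exact fun he => hg' (m.lab k) w (m.gad_ok k w h).2.2 he.symm

lemma bCol_ne_r (hg' : ∀ a b, Gr a b → g' a ≠ g' b) (k : ℕ) :
    bCol m g' k ≠ g' (m.lab k) :=
  third_ne1 _ _ (Ne.symm (aCol_ne m g' hg' k))

lemma bCol_ne_a (hg' : ∀ a b, Gr a b → g' a ≠ g' b) (k : ℕ) :
    bCol m g' k ≠ aCol m g' k :=
  third_ne2 _ _ (Ne.symm (aCol_ne m g' hg' k))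

lemma fCol_ne_r (hg' : ∀ a b, Gr a b → g' a ≠ g' b) (k : Fin m.N) (s : Fin 3)
    (hs : (s : ℕ) ≠ 0) : fCol m g' (k, s) ≠ g' (m.lab (k : ℕ)) := by
  rcases slot_cases s with h | h | h
  · exact absurd (by rw [h]; rfl) hs
  · rw [h, fCol_eval1 m g']; exact aCol_ne m g' hg' _
  · rw [h, fCol_eval2 m g']; exact bCol_ne_r m g' hg' _

lemma fCol_proper (hg' : ∀ a b, Gr a b → g' a ≠ g' b) :
    ∀ a b, (HG m).Adj a b → fCol m g' a ≠ fCol m g' b := by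
  have key : ∀ a b : VW m, Rl m a b → fCol m g' a ≠ fCol m g' b := by
    rintro ⟨k, s⟩ ⟨k', s'⟩ h
    rcases h with ⟨h1, h2⟩ | ⟨h1, h2, h3, h4⟩ | ⟨h1, h2, h3, h4⟩
    · -- same cluster
      have hk : k = k' := Fin.ext h1
      subst hk
      have c1 := aCol_ne m g' hg' (k : ℕ)
      have c2 := bCol_ne_r m g' hg' (k : ℕ)
      have c3 := bCol_ne_a m g' hg' (k : ℕ)
      rcases slot_cases s with hs | hs | hs <;> subst hs <;>
        rcases slot_cases s' with hs' | hs' | hs' <;> subst hs'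
      · exact absurd rfl h2
      · rw [fCol_eval0 m g', fCol_eval1 m g']; exact Ne.symm c1
      · rw [fCol_eval0 m g', fCol_eval2 m g']; exact Ne.symm c2
      · rw [fCol_eval1 m g', fCol_eval0 m g']; exact c1
      · exact absurd rfl h2
      · rw [fCol_eval1 m g', fCol_eval2 m g']; exact Ne.symm c3
      · rw [fCol_eval2 m g', fCol_eval0 m g']; exact c2
      · rw [fCol_eval2 m g', fCol_eval1 m g']; exact c3
      · exact absurd rfl h2
    · -- pin edge: a is aux of parent of k'
      have hlab : m.lab (k' : ℕ) = m.lab (k : ℕ) := by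
        conv_lhs => rw [← m.par_lab (k' : ℕ) k'.isLt]
        rw [h1]
      have hs0 : s' = 0 := Fin.ext h3
      subst hs0
      rw [fCol_eval0 m g', hlab]
      exact fCol_ne_r m g' hg' k s h4
    · -- gadget edge
      obtain ⟨w, hw⟩ := Option.ne_none_iff_exists'.mp h1
      obtain ⟨hga, hgb, hgc⟩ := m.gad_ok _ _ hw
      have hs1 : s = 1 := Fin.ext h3
      subst hs1
      rw [fCol_eval1 m g']
      have hac : aCol m g' (k : ℕ) = g' w := by simp [aCol, hw]
      have hlab' : m.lab (k' : ℕ) = w := by rw [h2]; exact hgb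
      rw [hac, ← hlab']
      exact fun he => fCol_ne_r m g' hg' k' s' h4 he.symm
  intro a b hab
  obtain ⟨hne, h | h⟩ := (hg_adj m _ _).mp hab
  · exact key a b h
  · exact fun e => key b a h e.symm

end Complete

end RealM3

/-- For every graph `G` there is a realization `(H, L)` of `G` (witnessed by the
injection `ι` of the vertices of `G` into those of `H`) together with an injective
ordering `τ` such that `(H, τ)` is `M_3`-free. -/
theorem realization_M3_free
    {VG : Type*} [Fintype VG] (G : SimpleGraph VG) :
    ∃ (W : Type) (_ : Fintype W) (H : SimpleGraph W) (ι : VG → W) (τ : W → ℝ)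
      (L : W → Finset (Fin 3)),
      Function.Injective ι ∧ Function.Injective τ ∧
      (∀ u : VG, L (ι u) = (Finset.univ : Finset (Fin 3))) ∧
      (∀ f : W → Fin 3, (∀ x y, H.Adj x y → f x ≠ f y) → (∀ x, f x ∈ L x) →
        ∀ u v : VG, G.Adj u v → f (ι u) ≠ f (ι v)) ∧
      (∀ g : VG → Fin 3, (∀ u v, G.Adj u v → g u ≠ g v) →
        ∃ f : W → Fin 3, (∀ x y, H.Adj x y → f x ≠ f y) ∧ (∀ x, f x ∈ L x) ∧
          ∀ u : VG, f (ι u) = g u) ∧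
      PatternFree H τ M3 := by
  classical
  set n := Fintype.card VG with hn
  set e : VG ≃ Fin n := Fintype.equivFin VG with he
  set Gr : ℕ → ℕ → Prop := fun a b =>
    ∃ (ha : a < n) (hb : b < n), G.Adj (e.symm ⟨a, ha⟩) (e.symm ⟨b, hb⟩) with hGr
  have hGrsymm : ∀ a b, Gr a b → Gr b a := by
    rintro a b ⟨ha, hb, h⟩; exact ⟨hb, ha, h.symm⟩
  have hGrne : ∀ a b, Gr a b → a ≠ b := by
    rintro a b ⟨ha, hb, h⟩ rfl
    exact G.loopless.irrefl _ h
  set l : List (ℕ × ℕ) := ((List.range n).product (List.range n)).filter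
    (fun p => decide (Gr p.1 p.2)) with hldef
  have hlmem : ∀ p ∈ l, p.1 < n ∧ p.2 < n ∧ p.1 ≠ p.2 ∧ Gr p.1 p.2 ∧ Gr p.2 p.1 := by
    intro p hp
    rw [hldef, List.mem_filter] at hp
    obtain ⟨-, hp2⟩ := hp
    have hg : Gr p.1 p.2 := of_decide_eq_true hp2
    obtain ⟨ha, hb, -⟩ := id hg
    exact ⟨ha, hb, hGrne _ _ hg, hg, hGrsymm _ _ hg⟩
  have hlcov : ∀ u v : VG, G.Adj u v → (((e u : ℕ), (e v : ℕ)) : ℕ × ℕ) ∈ l := by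
    intro u v huv
    rw [hldef, List.mem_filter]
    refine ⟨List.pair_mem_product.mpr
      ⟨List.mem_range.mpr (e u).isLt, List.mem_range.mpr (e v).isLt⟩, ?_⟩
    apply decide_eq_true
    refine ⟨(e u).isLt, (e v).isLt, ?_⟩
    rw [Fin.eta, Fin.eta, Equiv.symm_apply_apply, Equiv.symm_apply_apply]
    exact huv
  obtain ⟨m, hm⟩ := RealM3.machine_exists (n := n) (Gr := Gr) l hlmem
  refine ⟨RealM3.VW m, inferInstance, RealM3.HG m,
    fun u => (⟨(e u : ℕ), lt_of_lt_of_le (e u).isLt m.hn⟩, 0),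
    RealM3.tau m, fun _ => Finset.univ, ?_, RealM3.tau_inj m, fun _ => rfl, ?_, ?_,
    RealM3.pattern_free m⟩
  · -- injectivity of ι
    intro u v h
    have h1 := congrArg (fun w => ((w.1 : Fin m.N) : ℕ)) h
    simp only at h1
    exact e.injective (Fin.ext h1)
  · -- soundness
    intro f hf _ u v huv
    obtain ⟨c, w, hc1, hc2, hc3⟩ := hm _ (hlcov u v huv)
    have hcN : c < m.N := by omega
    have neq := RealM3.gad_neq m f hf c w hc2 hcN hc1
    have ch1 := RealM3.chain m f hf c hcN
    have ch2 := RealM3.chain m f hf (c + 1) hc1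
    rcases hc3 with ⟨hca, hcb⟩ | ⟨hca, hcb⟩
    · have e1 : f (⟨c, hcN⟩, 0) =
          f (⟨(e u : ℕ), lt_of_lt_of_le (e u).isLt m.hn⟩, 0) :=
        ch1.trans (RealM3.fcongr m f _ _ hca 0)
      have e2 : f (⟨c + 1, hc1⟩, 0) =
          f (⟨(e v : ℕ), lt_of_lt_of_le (e v).isLt m.hn⟩, 0) :=
        ch2.trans (RealM3.fcongr m f _ _ hcb 0)
      exact fun hEq => neq (e1.trans (hEq.trans e2.symm))
    · have e1 : f (⟨c, hcN⟩, 0) =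
          f (⟨(e v : ℕ), lt_of_lt_of_le (e v).isLt m.hn⟩, 0) :=
        ch1.trans (RealM3.fcongr m f _ _ hca 0)
      have e2 : f (⟨c + 1, hc1⟩, 0) =
          f (⟨(e u : ℕ), lt_of_lt_of_le (e u).isLt m.hn⟩, 0) :=
        ch2.trans (RealM3.fcongr m f _ _ hcb 0)
      exact fun hEq => neq (e1.trans (hEq.symm.trans e2.symm))
  · -- completeness
    intro g hg
    set g' : ℕ → Fin 3 := fun a => if h : a < n then g (e.symm ⟨a, h⟩) else 0 with hg'def
    have hg'p : ∀ a b, Gr a b → g' a ≠ g' b := by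
      rintro a b ⟨ha, hb, hadj⟩
      simp only [hg'def, dif_pos ha, dif_pos hb]
      exact hg _ _ hadj
    refine ⟨RealM3.fCol m g', RealM3.fCol_proper m g' hg'p,
      fun _ => Finset.mem_univ _, ?_⟩
    intro u
    rw [RealM3.fCol_eval0 m g']
    have hlab : m.lab ((⟨(e u : ℕ), lt_of_lt_of_le (e u).isLt m.hn⟩ : Fin m.N) : ℕ)
        = (e u : ℕ) := m.lab_orig _ (e u).isLt
    rw [hlab, hg'def]
    simp only [dif_pos (e u).isLt]
    rw [Fin.eta, Equiv.symm_apply_apply]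
end

section
/- For every finite simple graph G, there exist a finite simple graph H, an injective map τ : V(H) → ℝ, and a 3-list-assignment L of H such that (H,L) is a realization of G and the ordered graph (H,τ) is M_5-free. -/
/-- The ordered graph `M₅`: five vertices `v₁ < ⋯ < v₅` with exactly the edges
`v₁v₅`, `v₂v₃`. -/
def M5 : SimpleGraph (Fin 5) :=
  SimpleGraph.fromEdgeSet {s(0, 4), s(1, 2)}

open Equiv List Relation

theorem Equiv.Perm.apply_inv_self {α : Type*} (f : Equiv.Perm α) (x : α) : f (f⁻¹ x) = x :=
  Equiv.apply_symm_apply f x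

theorem Equiv.Perm.inv_apply_self {α : Type*} (f : Equiv.Perm α) (x : α) : f⁻¹ (f x) = x :=
  Equiv.symm_apply_apply f x

namespace M5C

/-! ### Lexicographic arithmetic lemmas -/

lemma lex_lt {M t1 j1 t2 j2 : ℕ} (h1 : j1 < M) (h2 : j2 < M) :
    M * t1 + j1 < M * t2 + j2 ↔ (t1 < t2 ∨ (t1 = t2 ∧ j1 < j2)) := by
  constructor
  · intro h
    rcases Nat.lt_trichotomy t1 t2 with ht | ht | ht
    · exact Or.inl ht
    · subst ht; exact Or.inr ⟨rfl, by omega⟩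
    · exfalso
      have : M * t2 + M ≤ M * t1 := by
        have := Nat.mul_le_mul_left M (Nat.succ_le_of_lt ht)
        simpa [Nat.mul_succ] using this
      omega
  · rintro (ht | ⟨rfl, hj⟩)
    · have : M * t1 + M ≤ M * t2 := by
        have := Nat.mul_le_mul_left M (Nat.succ_le_of_lt ht)
        simpa [Nat.mul_succ] using this
      omega
    · omega

lemma lex_eq {M t1 j1 t2 j2 : ℕ} (h1 : j1 < M) (h2 : j2 < M)
    (h : M * t1 + j1 = M * t2 + j2) : t1 = t2 ∧ j1 = j2 := by
  rcases Nat.lt_trichotomy t1 t2 with ht | ht | ht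
  · have := (lex_lt h1 h2).mpr (Or.inl ht); omega
  · subst ht; omega
  · have := (lex_lt h2 h1).mpr (Or.inl ht); omega

/-! ### Adjacent transpositions generate the symmetric group (as a reachability statement) -/

/-- One step: multiply on the right by an adjacent transposition. -/
def StepR (n : ℕ) (σ τ : Equiv.Perm (Fin n)) : Prop :=
  ∃ (r : ℕ) (h : r + 1 < n), τ = σ * Equiv.swap ⟨r, by omega⟩ ⟨r + 1, h⟩

lemma stepR_symm {n : ℕ} : Symmetric (StepR n) := by
  rintro σ τ ⟨r, h, rfl⟩
  exact ⟨r, h, by rw [mul_assoc, Equiv.swap_mul_self, mul_one]⟩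

lemma bubble {n : ℕ} (m : ℕ) (hm : m < n) :
    ∀ (d : ℕ) (σ : Equiv.Perm (Fin n)),
      (∀ i : Fin n, m + 1 ≤ (i : ℕ) → σ i = i) →
      (m - ((σ⁻¹ ⟨m, hm⟩ : Fin n) : ℕ) = d) →
      ∃ σ' : Equiv.Perm (Fin n),
        (∀ i : Fin n, m ≤ (i : ℕ) → σ' i = i) ∧ ReflTransGen (StepR n) σ' σ := by
  intro d
  induction d with
  | zero =>
    intro σ hfix hd
    have hple : ((σ⁻¹ ⟨m, hm⟩ : Fin n) : ℕ) ≤ m := by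
      by_contra hgt
      push_neg at hgt
      have h1 : σ (σ⁻¹ ⟨m, hm⟩) = σ⁻¹ ⟨m, hm⟩ := hfix _ hgt
      rw [Equiv.Perm.apply_inv_self] at h1
      have : ((σ⁻¹ ⟨m, hm⟩ : Fin n) : ℕ) = m := by rw [← h1]
      omega
    have hpe : ((σ⁻¹ ⟨m, hm⟩ : Fin n) : ℕ) = m := by omega
    have hfixm : σ ⟨m, hm⟩ = ⟨m, hm⟩ := by
      have : (σ⁻¹ ⟨m, hm⟩ : Fin n) = ⟨m, hm⟩ := Fin.ext hpe
      calc σ ⟨m, hm⟩ = σ (σ⁻¹ ⟨m, hm⟩) := by rw [this]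
      _ = ⟨m, hm⟩ := Equiv.Perm.apply_inv_self _ _
    refine ⟨σ, fun i hi => ?_, ReflTransGen.refl⟩
    rcases Nat.eq_or_lt_of_le hi with he | hlt
    · have : i = ⟨m, hm⟩ := Fin.ext he.symm
      rw [this]; exact hfixm
    · exact hfix i hlt
  | succ d ih =>
    intro σ hfix hd
    set p : Fin n := σ⁻¹ ⟨m, hm⟩ with hp
    have hple : (p : ℕ) < m := by
      by_contra hge
      push_neg at hge
      omega
    have hp1 : (p : ℕ) + 1 < n := by omega
    set w : Equiv.Perm (Fin n) := Equiv.swap ⟨(p : ℕ), by omega⟩ ⟨(p : ℕ) + 1, hp1⟩ with hw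
    set σ₁ : Equiv.Perm (Fin n) := σ * w with hσ₁
    have hstep : StepR n σ₁ σ := by
      refine ⟨(p : ℕ), hp1, ?_⟩
      rw [hσ₁, hw, mul_assoc, Equiv.swap_mul_self, mul_one]
    have hfix1 : ∀ i : Fin n, m + 1 ≤ (i : ℕ) → σ₁ i = i := by
      intro i hi
      have hne1 : i ≠ ⟨(p : ℕ), by omega⟩ := by
        intro hh; rw [hh] at hi; simp at hi; omega
      have hne2 : i ≠ ⟨(p : ℕ) + 1, hp1⟩ := by
        intro hh; rw [hh] at hi; simp at hi; omega
      rw [hσ₁]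
      simp only [Equiv.Perm.mul_apply]
      rw [hw, Equiv.swap_apply_of_ne_of_ne hne1 hne2]
      exact hfix i hi
    have hinv1 : σ₁⁻¹ ⟨m, hm⟩ = ⟨(p : ℕ) + 1, hp1⟩ := by
      have : σ₁ ⟨(p : ℕ) + 1, hp1⟩ = ⟨m, hm⟩ := by
        rw [hσ₁]
        simp only [Equiv.Perm.mul_apply]
        rw [hw, Equiv.swap_apply_right]
        have : (⟨(p : ℕ), by omega⟩ : Fin n) = p := Fin.ext rfl
        rw [this, hp]
        exact Equiv.Perm.apply_inv_self _ _
      rw [← this, Equiv.Perm.inv_apply_self]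
    obtain ⟨σ', h1, h2⟩ := ih σ₁ hfix1 (by rw [hinv1]; simp; omega)
    exact ⟨σ', h1, h2.tail hstep⟩

lemma fix_reach {n : ℕ} : ∀ (m : ℕ) (σ : Equiv.Perm (Fin n)),
    (∀ i : Fin n, m ≤ (i : ℕ) → σ i = i) → ReflTransGen (StepR n) 1 σ := by
  intro m
  induction m with
  | zero =>
    intro σ h
    have : σ = 1 := Equiv.ext fun i => h i (Nat.zero_le _)
    rw [this]
  | succ m ih =>
    intro σ h
    by_cases hm : m < n
    · obtain ⟨σ', h1, h2⟩ := bubble m hm (m - ((σ⁻¹ ⟨m, hm⟩ : Fin n) : ℕ)) σ h rfl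
      exact (ih σ' h1).trans h2
    · exact ih σ (fun i hi => by have := i.isLt; omega)

lemma reach {n : ℕ} (σ τ : Equiv.Perm (Fin n)) : ReflTransGen (StepR n) σ τ := by
  have h1 : ReflTransGen (StepR n) 1 σ := fix_reach n σ (fun i hi => by have := i.isLt; omega)
  have h2 : ReflTransGen (StepR n) 1 τ := fix_reach n τ (fun i hi => by have := i.isLt; omega)
  exact (@Std.Symm.symm _ _ (@ReflTransGen.symmetric _ _ ⟨stepR_symm⟩) _ _ h1).trans h2

/-- value description of an adjacent swap -/
lemma swap_val {n r : ℕ} (h : r + 1 < n) (m : Fin n) :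
    ((Equiv.swap ⟨r, by omega⟩ ⟨r + 1, h⟩ : Equiv.Perm (Fin n)) m : ℕ) =
      if (m : ℕ) = r then r + 1 else if (m : ℕ) = r + 1 then r else (m : ℕ) := by
  rcases eq_or_ne m ⟨r, by omega⟩ with rfl | h1
  · rw [Equiv.swap_apply_left]
    simp
  · rcases eq_or_ne m ⟨r + 1, h⟩ with rfl | h2
    · rw [Equiv.swap_apply_right]
      have hne : ¬ ((⟨r+1, h⟩ : Fin n) : ℕ) = r := by simp
      rw [if_neg hne]
      simp
    · rw [Equiv.swap_apply_of_ne_of_ne h1 h2]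
      have e1 : ¬ (m : ℕ) = r := fun hh => h1 (Fin.ext hh)
      have e2 : ¬ (m : ℕ) = r + 1 := fun hh => h2 (Fin.ext hh)
      rw [if_neg e1, if_neg e2]


universe u

section Main

variable {V : Type u} (G : SimpleGraph V) {n T : ℕ} (eqv : V ≃ Fin n)
  (A : Fin (T + 1) → Equiv.Perm (Fin n))

/-- Vertex set: copies (column, row) and helpers (boundary, row, index). -/
abbrev WW (n T : ℕ) : Type := (Fin (T + 1) × Fin n) ⊕ (Fin T × Fin n × Fin 3)

/-- Position of a vertex. -/
def NN : WW n T → ℕ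
  | Sum.inl (t, k) => 4 * n * (t : ℕ) + ((k : ℕ))
  | Sum.inr (t, k, s) => 4 * n * (t : ℕ) + (n + (3 * (k : ℕ) + (s : ℕ)))

/-- The base (oriented, left-to-right) adjacency relation. -/
def Rel : WW n T → WW n T → Prop
  | Sum.inl (a, k), Sum.inr (t, k', _) => (a : ℕ) = (t : ℕ) ∧ k' = k
  | Sum.inr (t, k, _), Sum.inl (b, j) => (b : ℕ) = (t : ℕ) + 1 ∧ j = (A b)⁻¹ (A t.castSucc k)
  | Sum.inl (a, k), Sum.inl (b, j) => (b : ℕ) = (a : ℕ) + 1 ∧ (k : ℕ) = n - 1 ∧ (j : ℕ) = 0 ∧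
      G.Adj (eqv.symm (A a k)) (eqv.symm (A b j))
  | _, _ => False

/-- The host graph. -/
def HH : SimpleGraph (WW n T) := SimpleGraph.fromRel (Rel G eqv A)

/-- The list assignment. -/
def LL : WW n T → Finset (Fin 3)
  | Sum.inl _ => Finset.univ
  | Sum.inr (_, _, s) => {s}ᶜ

lemma nn_inl (t : Fin (T+1)) (k : Fin n) :
    NN (Sum.inl (t, k) : WW n T) = 4 * n * (t : ℕ) + ((k : ℕ)) := rfl

lemma nn_inr (t : Fin T) (k : Fin n) (s : Fin 3) :
    NN (Sum.inr (t, k, s) : WW n T) = 4 * n * (t : ℕ) + (n + (3 * (k : ℕ) + (s : ℕ))) := rfl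

lemma bnd_inl (k : Fin n) : ((k : ℕ)) < 4 * n := by have := k.isLt; omega

lemma bnd_inr (k : Fin n) (s : Fin 3) : n + (3 * (k : ℕ) + (s : ℕ)) < 4 * n := by
  have := k.isLt; have := s.isLt; omega

lemma nn_injective : Function.Injective (NN (n := n) (T := T)) := by
  rintro (⟨t1, k1⟩ | ⟨t1, k1, s1⟩) (⟨t2, k2⟩ | ⟨t2, k2, s2⟩) h <;>
    simp only [NN] at h
  · obtain ⟨ht, hj⟩ := lex_eq (bnd_inl k1) (bnd_inl k2) h
    rw [Fin.ext ht, Fin.ext hj]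
  · obtain ⟨ht, hj⟩ := lex_eq (bnd_inl k1) (bnd_inr k2 s2) h
    exfalso; have := k1.isLt; omega
  · obtain ⟨ht, hj⟩ := lex_eq (bnd_inr k1 s1) (bnd_inl k2) h
    exfalso; have := k2.isLt; omega
  · obtain ⟨ht, hj⟩ := lex_eq (bnd_inr k1 s1) (bnd_inr k2 s2) h
    have hs1 := s1.isLt; have hs2 := s2.isLt
    have e1 : t1 = t2 := Fin.ext ht
    have e2 : k1 = k2 := Fin.ext (by omega)
    have e3 : s1 = s2 := Fin.ext (by omega)
    rw [e1, e2, e3]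

lemma rel_lt {x y : WW n T} (h : Rel G eqv A x y) : NN x < NN y := by
  rcases x with ⟨a, k⟩ | ⟨t, k, s⟩ <;> rcases y with ⟨b, j⟩ | ⟨t', k', s'⟩
  · obtain ⟨hb, hk, hj, -⟩ := h
    rw [nn_inl, nn_inl, lex_lt (bnd_inl k) (bnd_inl j)]
    omega
  · obtain ⟨ha, hk⟩ := h
    rw [nn_inl, nn_inr, lex_lt (bnd_inl k) (bnd_inr k' s')]
    have := k.isLt; omega
  · obtain ⟨hb, hj⟩ := h
    rw [nn_inr, nn_inl, lex_lt (bnd_inr k s) (bnd_inl j)]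
    omega
  · exact h.elim

lemma rel_of_adj {x y : WW n T} (h : (HH G eqv A).Adj x y) (hlt : NN x < NN y) :
    Rel G eqv A x y := by
  rw [HH, SimpleGraph.fromRel_adj] at h
  rcases h.2 with h' | h'
  · exact h'
  · exact absurd (rel_lt G eqv A h') (by omega)

end Main
section Main2

variable {V : Type u} (G : SimpleGraph V) {n T : ℕ} (eqv : V ≃ Fin n)
  (A : Fin (T + 1) → Equiv.Perm (Fin n))

lemma fin3_absurd {c d : Fin 3} (hcd : c ≠ d) (g : Fin 3 → Fin 3)
    (hg : ∀ s, g s ≠ s ∧ g s ≠ c ∧ g s ≠ d) : False := by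
  revert hcd hg
  revert c d g
  decide

/-- colour forcing along a boundary -/
lemma col1 (f : WW n T → Fin 3)
    (hf : ∀ x y, (HH G eqv A).Adj x y → f x ≠ f y)
    (hfl : ∀ x, f x ∈ LL x) (t : Fin T) (k : Fin n) :
    f (Sum.inl (t.castSucc, k)) = f (Sum.inl (t.succ, (A t.succ)⁻¹ (A t.castSucc k))) := by
  by_contra hne
  set a : WW n T := Sum.inl (t.castSucc, k) with ha
  set b : WW n T := Sum.inl (t.succ, (A t.succ)⁻¹ (A t.castSucc k)) with hb
  have key : ∀ s : Fin 3, f (Sum.inr (t, k, s)) ≠ s ∧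
      f (Sum.inr (t, k, s)) ≠ f a ∧ f (Sum.inr (t, k, s)) ≠ f b := by
    intro s
    refine ⟨?_, ?_, ?_⟩
    · have := hfl (Sum.inr (t, k, s))
      simpa [LL] using this
    · have hadj : (HH G eqv A).Adj a (Sum.inr (t, k, s)) := by
        rw [HH, SimpleGraph.fromRel_adj]
        exact ⟨by simp, Or.inl ⟨by simp, rfl⟩⟩
      exact fun hh => (hf _ _ hadj) hh.symm
    · have hadj : (HH G eqv A).Adj (Sum.inr (t, k, s)) b := by
        rw [HH, SimpleGraph.fromRel_adj]
        refine ⟨by simp, Or.inl ⟨by simp, rfl⟩⟩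
      exact hf _ _ hadj
  exact fin3_absurd hne (fun s => f (Sum.inr (t, k, s))) key

lemma col2 (f : WW n T → Fin 3)
    (hf : ∀ x y, (HH G eqv A).Adj x y → f x ≠ f y)
    (hfl : ∀ x, f x ∈ LL x) :
    ∀ (t : Fin (T + 1)) (k : Fin n),
      f (Sum.inl (t, k)) = f (Sum.inl (0, (A 0)⁻¹ (A t k))) := by
  intro t
  induction t using Fin.induction with
  | zero => intro k; simp
  | succ t ih =>
    intro j
    have h1 := col1 G eqv A f hf hfl t ((A t.castSucc)⁻¹ (A t.succ j))
    simp only [Equiv.Perm.apply_inv_self, Equiv.Perm.inv_apply_self] at h1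
    rw [← h1, ih ((A t.castSucc)⁻¹ (A t.succ j)), Equiv.Perm.apply_inv_self]

/-- the embedding of the original vertices -/
def emb : V → WW n T := fun u => Sum.inl (0, (A 0)⁻¹ (eqv u))

lemma emb_injective : Function.Injective (emb (n := n) (T := T) eqv A) := by
  intro u v h
  simp only [emb, Sum.inl.injEq, Prod.mk.injEq, true_and] at h
  exact eqv.injective ((A 0)⁻¹.injective h)

/-- the downward direction: proper list colourings of `HH` restrict to proper colourings -/
lemma downward
    (CV : ∀ u v, G.Adj u v → ∃ (t : Fin T) (k j : Fin n), (k : ℕ) = n - 1 ∧ (j : ℕ) = 0 ∧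
      A t.castSucc k = eqv u ∧ A t.succ j = eqv v)
    (f : WW n T → Fin 3)
    (hf : ∀ x y, (HH G eqv A).Adj x y → f x ≠ f y)
    (hfl : ∀ x, f x ∈ LL x) :
    ∀ u v, G.Adj u v → f (emb eqv A u) ≠ f (emb eqv A v) := by
  intro u v huv
  obtain ⟨t, k, j, hk, hj, hu, hv⟩ := CV u v huv
  have hadj : (HH G eqv A).Adj (Sum.inl (t.castSucc, k)) (Sum.inl (t.succ, j)) := by
    rw [HH, SimpleGraph.fromRel_adj]
    constructor
    · intro hh
      simp only [Sum.inl.injEq, Prod.mk.injEq] at hh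
      have := congrArg Fin.val hh.1
      simp at this
    · refine Or.inl ⟨by simp, hk, hj, ?_⟩
      rw [hu, hv, Equiv.symm_apply_apply, Equiv.symm_apply_apply]
      exact huv
  have hne := hf _ _ hadj
  have e1 := col2 G eqv A f hf hfl t.castSucc k
  have e2 := col2 G eqv A f hf hfl t.succ j
  rw [e1, e2, hu, hv] at hne
  exact hne

/-- choice of a colour distinct from two given ones -/
def pick (s c : Fin 3) : Fin 3 :=
  if 0 ≠ s ∧ 0 ≠ c then 0 else if 1 ≠ s ∧ 1 ≠ c then 1 else 2

lemma pick_spec : ∀ s c : Fin 3, pick s c ≠ s ∧ pick s c ≠ c := by decide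

/-- the upward direction: extending a proper colouring of `G` -/
lemma upward (g : V → Fin 3) (hg : ∀ u v, G.Adj u v → g u ≠ g v) :
    ∃ f : WW n T → Fin 3,
      (∀ x y, (HH G eqv A).Adj x y → f x ≠ f y) ∧ (∀ x, f x ∈ LL x) ∧
      ∀ u, f (emb eqv A u) = g u := by
  classical
  refine ⟨fun w => match w with
    | Sum.inl (t, k) => g (eqv.symm (A t k))
    | Sum.inr (t, k, s) => pick s (g (eqv.symm (A t.castSucc k))), ?_, ?_, ?_⟩
  · have aux : ∀ x y, Rel G eqv A x y →
        (match x with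
          | Sum.inl (t, k) => g (eqv.symm (A t k))
          | Sum.inr (t, k, s) => pick s (g (eqv.symm (A t.castSucc k)))) ≠
        (match y with
          | Sum.inl (t, k) => g (eqv.symm (A t k))
          | Sum.inr (t, k, s) => pick s (g (eqv.symm (A t.castSucc k)))) := by
      rintro (⟨a, k⟩ | ⟨t, k, s⟩) (⟨b, j⟩ | ⟨t', k', s'⟩) hr
      · obtain ⟨hb, hk, hj, hadj⟩ := hr
        exact hg _ _ hadj
      · obtain ⟨ha, hk⟩ := hr
        have e : a = t'.castSucc := Fin.ext (by simpa using ha)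
        show g (eqv.symm (A a k)) ≠ pick s' (g (eqv.symm (A t'.castSucc k')))
        rw [e, hk]
        exact fun hh => (pick_spec s' _).2 hh.symm
      · obtain ⟨hb, hj⟩ := hr
        subst hj
        show pick s (g (eqv.symm (A t.castSucc k))) ≠
          g (eqv.symm (A b ((A b)⁻¹ (A t.castSucc k))))
        rw [Equiv.Perm.apply_inv_self]
        exact (pick_spec s (g (eqv.symm (A t.castSucc k)))).2
      · exact hr.elim
    intro x y hxy
    rw [HH, SimpleGraph.fromRel_adj] at hxy
    rcases hxy.2 with h | h
    · exact aux x y h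
    · exact fun hh => (aux y x h) hh.symm
  · rintro (⟨t, k⟩ | ⟨t, k, s⟩)
    · simp [LL]
    · simp only [LL, Finset.mem_compl, Finset.mem_singleton]
      exact (pick_spec s _).1
  · intro u
    simp [emb, Equiv.Perm.apply_inv_self]

end Main2
section Main3

variable {V : Type u} (G : SimpleGraph V) {n T : ℕ} (eqv : V ≃ Fin n)
  (A : Fin (T + 1) → Equiv.Perm (Fin n))

lemma patternFree
    (hStep : ∀ t : Fin T, A t.succ = A t.castSucc ∨ StepR n (A t.castSucc) (A t.succ)) :
    PatternFree (HH G eqv A) (fun w => ((NN w : ℕ) : ℝ)) M5 := by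
  rintro ⟨x, hmono, hiff⟩
  have hM04 : M5.Adj 0 4 := by
    rw [M5, SimpleGraph.fromEdgeSet_adj]
    exact ⟨by simp, by decide⟩
  have hM12 : M5.Adj 1 2 := by
    rw [M5, SimpleGraph.fromEdgeSet_adj]
    exact ⟨by simp, by decide⟩
  have m01 : NN (x 0) < NN (x 1) := Nat.cast_lt.mp (hmono 0 1 (by decide))
  have m12 : NN (x 1) < NN (x 2) := Nat.cast_lt.mp (hmono 1 2 (by decide))
  have m23 : NN (x 2) < NN (x 3) := Nat.cast_lt.mp (hmono 2 3 (by decide))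
  have m34 : NN (x 3) < NN (x 4) := Nat.cast_lt.mp (hmono 3 4 (by decide))
  have m24 : NN (x 2) < NN (x 4) := m23.trans m34
  have R04 : Rel G eqv A (x 0) (x 4) :=
    rel_of_adj G eqv A ((hiff 0 4).2 hM04) (by omega)
  have R12 : Rel G eqv A (x 1) (x 2) :=
    rel_of_adj G eqv A ((hiff 1 2).2 hM12) m12
  clear hiff hmono hM04 hM12 m12
  rcases h0 : x 0 with ⟨a0, k0⟩ | ⟨t0, k0, s0⟩ <;> rw [h0] at R04 m01 <;>
    rcases h4 : x 4 with ⟨a4, k4⟩ | ⟨t4, k4, s4⟩ <;> rw [h4] at R04 m24 m34 <;>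
    simp only [Rel] at R04
  · -- CASE C : the long edge is a link edge
    obtain ⟨hb4, hk0, hj4, -⟩ := R04
    rcases h1 : x 1 with ⟨a1, k1⟩ | ⟨t1, k1, s1⟩ <;> rw [h1] at R12 m01 <;>
      rcases h2 : x 2 with ⟨b2, j2⟩ | ⟨t2, k2, s2⟩ <;> rw [h2] at R12 m24 <;>
      simp only [Rel] at R12 <;> simp only [NN] at m01 m24
    · -- inner link edge
      obtain ⟨hb2, hk1, hj2, -⟩ := R12
      have L1 := (lex_lt (bnd_inl k0) (bnd_inl k1)).mp m01
      have L2 := (lex_lt (bnd_inl j2) (bnd_inl k4)).mp m24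
      have := k1.isLt
      omega
    · -- inner copy→helper edge
      obtain ⟨ha1, hk2⟩ := R12
      have L1 := (lex_lt (bnd_inl k0) (bnd_inl k1)).mp m01
      have L2 := (lex_lt (bnd_inr k2 s2) (bnd_inl k4)).mp m24
      have := k1.isLt
      omega
    · -- inner helper→copy edge
      obtain ⟨hb2, hj2⟩ := R12
      have L1 := (lex_lt (bnd_inl k0) (bnd_inr k1 s1)).mp m01
      have L2 := (lex_lt (bnd_inl j2) (bnd_inl k4)).mp m24
      have := j2.isLt
      omega
  · -- CASE A : the long edge goes from a copy to a helper
    obtain ⟨ha0, hk4⟩ := R04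
    have hk4v : (k4 : ℕ) = (k0 : ℕ) := congrArg Fin.val hk4
    rcases h1 : x 1 with ⟨a1, k1⟩ | ⟨t1, k1, s1⟩ <;> rw [h1] at R12 m01 <;>
      rcases h2 : x 2 with ⟨b2, j2⟩ | ⟨t2, k2, s2⟩ <;> rw [h2] at R12 m24 <;>
      simp only [Rel] at R12 <;> simp only [NN] at m01 m24
    · obtain ⟨hb2, hk1, hj2, -⟩ := R12
      have L1 := (lex_lt (bnd_inl k0) (bnd_inl k1)).mp m01
      have L2 := (lex_lt (bnd_inl j2) (bnd_inr k4 s4)).mp m24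
      omega
    · obtain ⟨ha1, hk2⟩ := R12
      have hk2v : (k2 : ℕ) = (k1 : ℕ) := congrArg Fin.val hk2
      have L1 := (lex_lt (bnd_inl k0) (bnd_inl k1)).mp m01
      have L2 := (lex_lt (bnd_inr k2 s2) (bnd_inr k4 s4)).mp m24
      have := s2.isLt; have := s4.isLt
      omega
    · obtain ⟨hb2, hj2⟩ := R12
      have L1 := (lex_lt (bnd_inl k0) (bnd_inr k1 s1)).mp m01
      have L2 := (lex_lt (bnd_inl j2) (bnd_inr k4 s4)).mp m24
      omega
  · -- CASE B : the long edge goes from a helper to a copy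
    obtain ⟨ha4, hk4f⟩ := R04
    rcases h1 : x 1 with ⟨a1, k1⟩ | ⟨t1, k1, s1⟩ <;> rw [h1] at R12 m01 <;>
      rcases h2 : x 2 with ⟨b2, j2⟩ | ⟨t2, k2, s2⟩ <;> rw [h2] at R12 m24 <;>
      simp only [Rel] at R12 <;> simp only [NN] at m01 m24
    · obtain ⟨hb2, hk1, hj2, -⟩ := R12
      have L1 := (lex_lt (bnd_inr k0 s0) (bnd_inl k1)).mp m01
      have L2 := (lex_lt (bnd_inl j2) (bnd_inl k4)).mp m24
      have := k1.isLt; have := k4.isLt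
      omega
    · obtain ⟨ha1, hk2⟩ := R12
      have L1 := (lex_lt (bnd_inr k0 s0) (bnd_inl k1)).mp m01
      have L2 := (lex_lt (bnd_inr k2 s2) (bnd_inl k4)).mp m24
      have := k1.isLt; have := k4.isLt
      omega
    · -- the hard case: a nested helper→copy edge; uses the adjacent-swap property
      obtain ⟨hb2, hj2f⟩ := R12
      have L1 := (lex_lt (bnd_inr k0 s0) (bnd_inr k1 s1)).mp m01
      have L2 := (lex_lt (bnd_inl j2) (bnd_inl k4)).mp m24
      have ht : (t1 : ℕ) = (t0 : ℕ) := by omega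
      have hks : 3 * (k0 : ℕ) + (s0 : ℕ) < 3 * (k1 : ℕ) + (s1 : ℕ) := by omega
      have hj : (j2 : ℕ) < (k4 : ℕ) := by omega
      have ht10 : t1 = t0 := Fin.ext ht
      rw [ht10] at hj2f hb2
      have hb2succ : b2 = t0.succ := Fin.ext (by rw [hb2, Fin.val_succ])
      have ha4succ : a4 = t0.succ := Fin.ext (by rw [ha4, Fin.val_succ])
      rw [hb2succ] at hj2f
      rw [ha4succ] at hk4f
      have hkne : (k1 : ℕ) ≠ (k0 : ℕ) := by
        intro e
        have ekk : k1 = k0 := Fin.ext e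
        rw [hj2f, ekk, ← hk4f] at hj
        omega
      have hkv : (k0 : ℕ) < (k1 : ℕ) := by omega
      rcases hStep t0 with hA | ⟨r, hr, hsw⟩
      · rw [hj2f, hA, Equiv.Perm.inv_apply_self] at hj
        rw [hk4f, hA, Equiv.Perm.inv_apply_self] at hj
        omega
      · have einv : ∀ k : Fin n,
            (A t0.succ)⁻¹ (A t0.castSucc k) =
              Equiv.swap ⟨r, by omega⟩ ⟨r + 1, hr⟩ k := by
          intro k
          rw [hsw, mul_inv_rev, Equiv.Perm.mul_apply, Equiv.Perm.inv_apply_self,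
            Equiv.swap_inv]
        have v4 : (k4 : ℕ) = if (k0 : ℕ) = r then r + 1 else
            if (k0 : ℕ) = r + 1 then r else (k0 : ℕ) := by
          rw [hk4f, einv]; exact swap_val hr k0
        have v2 : (j2 : ℕ) = if (k1 : ℕ) = r then r + 1 else
            if (k1 : ℕ) = r + 1 then r else (k1 : ℕ) := by
          rw [hj2f, einv]; exact swap_val hr k1
        have hcons : (k4 : ℕ) = (j2 : ℕ) + 1 := by
          rw [v4, v2]; rw [v4, v2] at hj
          split_ifs at hj ⊢ <;> omega
        rcases h3 : x 3 with ⟨a3, k3⟩ | ⟨t3, k3, s3⟩ <;>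
          rw [h2, h3] at m23 <;> rw [h3] at m34 <;> simp only [NN] at m23 m34
        · have L3 := (lex_lt (bnd_inl j2) (bnd_inl k3)).mp m23
          have L4 := (lex_lt (bnd_inl k3) (bnd_inl k4)).mp m34
          omega
        · have L3 := (lex_lt (bnd_inl j2) (bnd_inr k3 s3)).mp m23
          have L4 := (lex_lt (bnd_inr k3 s3) (bnd_inl k4)).mp m34
          omega

end Main3
section Build

/-- A step that is allowed between consecutive arrangements. -/
def StepE (n : ℕ) (σ τ : Equiv.Perm (Fin n)) : Prop := τ = σ ∨ StepR n σ τ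

lemma exists_perm_top_bot {n : ℕ} (a b : Fin n) (hab : a ≠ b) :
    ∃ (σ : Equiv.Perm (Fin n)) (k j : Fin n),
      (k : ℕ) = n - 1 ∧ (j : ℕ) = 0 ∧ σ k = a ∧ σ j = b := by
  have h2 : 1 < n := by
    by_contra h
    push_neg at h
    have := a.isLt; have := b.isLt
    exact hab (Fin.ext (by omega))
  set k : Fin n := ⟨n - 1, by omega⟩ with hkdef
  set j : Fin n := ⟨0, by omega⟩ with hjdef
  set σ₀ := Equiv.swap k a with hσ₀
  have hσ₀k : σ₀ k = a := Equiv.swap_apply_left _ _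
  set c := σ₀⁻¹ b with hc
  have hck : k ≠ c := by
    intro e
    apply hab
    have hb : σ₀ c = b := by rw [hc, Equiv.Perm.apply_inv_self]
    rw [← e, hσ₀k] at hb
    exact hb
  have hkj : k ≠ j := by
    intro e
    have := congrArg Fin.val e
    simp [hkdef, hjdef] at this
    omega
  refine ⟨σ₀ * Equiv.swap j c, k, j, rfl, rfl, ?_, ?_⟩
  · rw [Equiv.Perm.mul_apply, Equiv.swap_apply_of_ne_of_ne hkj hck, hσ₀k]
  · rw [Equiv.Perm.mul_apply, Equiv.swap_apply_left, hc, Equiv.Perm.apply_inv_self]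

lemma chain_chain' {α : Type u} {R : α → α → Prop} :
    ∀ (l : List α) (a : α), List.Chain R a l → List.Chain' R (a :: l)
  | [], a, _ => List.isChain_singleton a
  | b :: l, a, h => by
    rcases List.chain_cons.mp h with ⟨hab, h'⟩
    rw [List.Chain', List.isChain_cons_cons]
    exact ⟨hab, chain_chain' l b h'⟩

variable {V : Type u} (G : SimpleGraph V) {n : ℕ} (eqv : V ≃ Fin n)

/-- the list `l` contains a consecutive pair of equal arrangements putting
`p.1` on top and `p.2` at the bottom. -/
def Covers (l : List (Equiv.Perm (Fin n))) (p : V × V) : Prop :=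
  ∃ l1 l2 σ, l = l1 ++ σ :: σ :: l2 ∧ ∃ k j : Fin n, (k : ℕ) = n - 1 ∧ (j : ℕ) = 0 ∧
    σ k = eqv p.1 ∧ σ j = eqv p.2

lemma covers_append_left (l0 l : List (Equiv.Perm (Fin n))) (p : V × V)
    (h : Covers eqv l p) : Covers eqv (l0 ++ l) p := by
  obtain ⟨l1, l2, σ, rfl, hrest⟩ := h
  exact ⟨l0 ++ l1, l2, σ, by simp, hrest⟩

lemma build (es : List (V × V)) (hes : ∀ p ∈ es, G.Adj p.1 p.2) :
    ∃ l : List (Equiv.Perm (Fin n)), l ≠ [] ∧ List.Chain' (StepE n) l ∧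
      ∀ p ∈ es, Covers eqv l p := by
  induction es with
  | nil => exact ⟨[1], by simp, List.isChain_singleton 1, by simp⟩
  | cons p es ih =>
    obtain ⟨l', hne, hch, hcov⟩ := ih (fun q hq => hes q (List.mem_cons_of_mem _ hq))
    have hadj := hes p (List.mem_cons_self)
    have hne' : eqv p.1 ≠ eqv p.2 := fun e => (G.ne_of_adj hadj) (eqv.injective e)
    obtain ⟨σ, k, j, hk, hj, hk1, hj1⟩ := exists_perm_top_bot _ _ hne'
    obtain ⟨c, hc, hlast⟩ := List.exists_isChain_cons_of_relationReflTransGen (reach σ (l'.head hne))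
    have hsplit : σ :: ((σ :: c) ++ l') = (σ :: σ :: c) ++ l' := by simp
    refine ⟨σ :: ((σ :: c) ++ l'), by simp, ?_, ?_⟩
    · rw [List.Chain', List.isChain_cons]
      constructor
      · intro y hy
        simp only [List.cons_append, List.head?_cons, Option.mem_def, Option.some.injEq] at hy
        exact Or.inl hy.symm
      · refine List.IsChain.append (chain_chain' c σ (hc.imp fun a b hab => Or.inr hab)) hch ?_
        intro a ha b hb
        rw [List.getLast?_eq_getLast (l := σ :: c) (by simp), Option.mem_def, Option.some.injEq] at ha
        rw [List.head?_eq_head hne, Option.mem_def, Option.some.injEq] at hb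
        refine Or.inl ?_
        have haa : a = l'.head hne := by rw [← ha]; exact hlast
        rw [haa, hb]
    · intro q hq
      rcases List.mem_cons.mp hq with rfl | hq'
      · exact ⟨[], c ++ l', σ, by simp, k, j, hk, hj, hk1, hj1⟩
      · rw [hsplit]
        exact covers_append_left eqv _ _ _ (hcov q hq')

end Build
end M5C
namespace M5C

lemma get_pair_left {α : Type u} (l1 l2 : List α) (σ : α)
    (h : l1.length < (l1 ++ σ :: σ :: l2).length) :
    (l1 ++ σ :: σ :: l2).get ⟨l1.length, h⟩ = σ := by
  have e : (l1 ++ σ :: σ :: l2)[l1.length]'(by simp) = σ := by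
    rw [List.getElem_append_right (le_refl _)]
    simp
  rw [List.get_eq_getElem]
  exact e

lemma get_pair_right {α : Type u} (l1 l2 : List α) (σ : α)
    (h : l1.length + 1 < (l1 ++ σ :: σ :: l2).length) :
    (l1 ++ σ :: σ :: l2).get ⟨l1.length + 1, h⟩ = σ := by
  have e : (l1 ++ σ :: σ :: l2)[l1.length + 1]'(by simp) = σ := by
    rw [List.getElem_append_right (Nat.le_succ _)]
    have e2 : l1.length + 1 - l1.length = 1 := by omega
    simp [e2]
  rw [List.get_eq_getElem]
  exact e

variable {V : Type u} {n : ℕ} (eqv : V ≃ Fin n)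

lemma covers_extract {l : List (Equiv.Perm (Fin n))} {p : V × V}
    (h : Covers eqv l p) :
    ∃ (i : ℕ) (hi : i + 1 < l.length) (k j : Fin n), (k : ℕ) = n - 1 ∧ (j : ℕ) = 0 ∧
      (l.get ⟨i, by omega⟩) k = eqv p.1 ∧ (l.get ⟨i + 1, hi⟩) j = eqv p.2 := by
  obtain ⟨l1, l2, σ, rfl, k, j, hk, hj, h1, h2⟩ := h
  have hlen : l1.length + 1 < (l1 ++ σ :: σ :: l2).length := by simp
  refine ⟨l1.length, hlen, k, j, hk, hj, ?_, ?_⟩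
  · rw [get_pair_left]; exact h1
  · rw [get_pair_right]; exact h2

end M5C

/-- For every graph `G` there is a realization `(H, L)` of `G` (witnessed by the
injection `ι` of the vertices of `G` into those of `H`) together with an injective
ordering `τ` such that `(H, τ)` is `M_5`-free. -/
theorem realization_M5_free
    {VG : Type*} [Fintype VG] (G : SimpleGraph VG) :
    ∃ (W : Type) (_ : Fintype W) (H : SimpleGraph W) (ι : VG → W) (τ : W → ℝ)
      (L : W → Finset (Fin 3)),
      Function.Injective ι ∧ Function.Injective τ ∧
      (∀ u : VG, L (ι u) = (Finset.univ : Finset (Fin 3))) ∧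
      (∀ f : W → Fin 3, (∀ x y, H.Adj x y → f x ≠ f y) → (∀ x, f x ∈ L x) →
        ∀ u v : VG, G.Adj u v → f (ι u) ≠ f (ι v)) ∧
      (∀ g : VG → Fin 3, (∀ u v, G.Adj u v → g u ≠ g v) →
        ∃ f : W → Fin 3, (∀ x y, H.Adj x y → f x ≠ f y) ∧ (∀ x, f x ∈ L x) ∧
          ∀ u : VG, f (ι u) = g u) ∧
      PatternFree H τ M5 := by
  classical
  obtain ⟨n, ⟨eqv⟩⟩ : ∃ n, Nonempty (VG ≃ Fin n) := ⟨_, ⟨Fintype.equivFin VG⟩⟩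
  set es := ((Finset.univ : Finset (VG × VG)).filter fun p => G.Adj p.1 p.2).toList
    with hes_def
  have hes : ∀ p ∈ es, G.Adj p.1 p.2 := by
    intro p hp
    rw [hes_def, Finset.mem_toList, Finset.mem_filter] at hp
    exact hp.2
  obtain ⟨l, hlne, hlch, hlcov⟩ := M5C.build G eqv es hes
  obtain ⟨T, hT⟩ : ∃ T, l.length = T + 1 := by
    refine ⟨l.length - 1, ?_⟩
    have := List.length_pos_iff.mpr hlne
    omega
  set A : Fin (T + 1) → Equiv.Perm (Fin n) :=
    (fun t => l.get ⟨(t : ℕ), by rw [hT]; exact t.isLt⟩) with hA_def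
  have hStep : ∀ t : Fin T, A t.succ = A t.castSucc ∨ M5C.StepR n (A t.castSucc) (A t.succ) := by
    intro t
    have htlt : (t : ℕ) < l.length - 1 := by
      rw [hT]; have := t.isLt; omega
    have hch := List.isChain_iff_getElem.mp hlch (t : ℕ) (by omega)
    have e1 : A t.castSucc = l.get ⟨(t : ℕ), by rw [hT]; have := t.isLt; omega⟩ := by
      rw [hA_def]
      apply congrArg
      exact Fin.ext (by simp)
    have e2 : A t.succ = l.get ⟨(t : ℕ) + 1, by rw [hT]; have := t.isLt; omega⟩ := by
      rw [hA_def]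
      apply congrArg
      exact Fin.ext (by simp)
    rw [e1, e2]
    exact hch
  have CV : ∀ u v, G.Adj u v → ∃ (t : Fin T) (k j : Fin n), (k : ℕ) = n - 1 ∧ (j : ℕ) = 0 ∧
      A t.castSucc k = eqv u ∧ A t.succ j = eqv v := by
    intro u v huv
    have hmem : (u, v) ∈ es := by
      rw [hes_def, Finset.mem_toList, Finset.mem_filter]
      exact ⟨Finset.mem_univ _, huv⟩
    obtain ⟨i, hi, k, j, hk, hj, h1, h2⟩ := M5C.covers_extract eqv (hlcov _ hmem)
    have hiT : i < T := by rw [hT] at hi; omega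
    refine ⟨⟨i, hiT⟩, k, j, hk, hj, ?_, ?_⟩
    · have e1 : A (Fin.castSucc ⟨i, hiT⟩) = l.get ⟨i, by rw [hT]; omega⟩ := by
        rw [hA_def]
        apply congrArg
        exact Fin.ext (by simp)
      rw [e1]
      exact h1
    · have e2 : A (Fin.succ ⟨i, hiT⟩) = l.get ⟨i + 1, by rw [hT]; omega⟩ := by
        rw [hA_def]
        apply congrArg
        exact Fin.ext (by simp)
      rw [e2]
      exact h2
  refine ⟨M5C.WW n T, inferInstance, M5C.HH G eqv A, M5C.emb eqv A,
    fun w => ((M5C.NN w : ℕ) : ℝ), M5C.LL, ?_, ?_, ?_, ?_, ?_, ?_⟩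
  · exact M5C.emb_injective eqv A
  · intro w1 w2 h
    exact M5C.nn_injective (Nat.cast_injective h)
  · intro u
    rfl
  · intro f hf hfl u v huv
    exact M5C.downward G eqv A CV f hf hfl u v huv
  · intro g hg
    exact M5C.upward G eqv A g hg
  · exact M5C.patternFree G eqv A hStep
end
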